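/- arXiv:2112.03329 — 6 statements merged into one kernel-verified Lean document; each statement's English description precedes it below -/
import Mathlib

section
/- For every integer m ≥ 1 and every real β with 0 < β < 1, there exists a time-inconsistent planning model M = (G, w, s, t, β) in which G has exactly 3m+1 vertices and all edge weights are nonnegative, such that every directed s–t path of G is feasible, G has exactly 2^m directed s–t paths, and the total costs of these 2^m paths are pairwise distinct. -/
/-!
Common definitions for time-inconsistent planning models (Kleinberg–Oren).
A task graph is given by a finite vertex type `V`, an edge relation
`E : V → V → Prop` and edge weights `w : V → V → ℝ`.  A directed path is
represented by the list of its vertices (nonempty, consecutive vertices joined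
by edges, no repeated vertices).
-/

variable {V : Type*}

/-- The (real) cost of a path: the sum of the weights of its edges. -/
def pathCost (w : V → V → ℝ) (p : List V) : ℝ :=
  ((p.zip p.tail).map fun e => w e.1 e.2).sum

/-- `p` is a directed path from `a` to `b` in the graph with edge relation `E`. -/
def IsPathOn (E : V → V → Prop) (a b : V) (p : List V) : Prop :=
  p.head? = some a ∧ p.getLast? = some b ∧ p.Chain' E ∧ p.Nodup

/-- The perceived cost of a path with present bias `β`:
the weight of the first edge plus `β` times the total weight of the rest. -/
def perceived (w : V → V → ℝ) (β : ℝ) (p : List V) : ℝ :=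
  match p.zip p.tail with
  | [] => 0
  | e :: es => w e.1 e.2 + β * ((es.map fun e' => w e'.1 e'.2).sum)

/-- The edge `a → b` is a feasible transition (towards target `t`): it is the
first edge of some `a`–`t` path whose perceived cost is minimum among all
`a`–`t` paths. -/
def FeasibleStep (E : V → V → Prop) (w : V → V → ℝ) (β : ℝ) (t : V) (a b : V) : Prop :=
  E a b ∧ ∃ q : List V, IsPathOn E a t (a :: b :: q) ∧
    ∀ r : List V, IsPathOn E a t r → perceived w β (a :: b :: q) ≤ perceived w β r

/-- A feasible `s`–`t` path: every edge on it is a feasible transition from its tail. -/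
def FeasPath (E : V → V → Prop) (w : V → V → ℝ) (β : ℝ) (s t : V) (p : List V) : Prop :=
  IsPathOn E s t p ∧ p.Chain' (FeasibleStep E w β t)

/-- The directed graph is acyclic: no directed cycle. -/
def NoDirCycle (E : V → V → Prop) : Prop := ∀ v, ¬ Relation.TransGen E v v

open Fin.NatCast

namespace S0

def R (x y : ℕ) : Prop := if x % 3 = 0 then y = x + 1 ∨ y = x + 2 else y = x / 3 * 3 + 3

def W (β : ℝ) (x y : ℕ) : ℝ :=
  if x % 3 = 0 then (if y = x + 1 then β * 2 ^ (x / 3) else 0)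
  else if x % 3 = 2 then (2 : ℝ) ^ (x / 3) else 0

def pathL (f : ℕ → Bool) : ℕ → ℕ → List ℕ
  | j, 0 => [3 * j]
  | j, k + 1 => 3 * j :: (3 * j + (if f j then 2 else 1)) :: pathL f (j + 1) k

lemma R_lt {x y : ℕ} (h : R x y) : x < y := by
  unfold R at h; split at h <;> omega

lemma pathL_shape (f : ℕ → Bool) (j k : ℕ) : ∃ tl, pathL f j k = 3 * j :: tl := by
  cases k <;> exact ⟨_, rfl⟩

lemma pathL_succ (f : ℕ → Bool) (j k : ℕ) :
    pathL f j (k + 1) = 3 * j :: (3 * j + (if f j then 2 else 1)) :: pathL f (j + 1) k := rfl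

lemma pathL_head (f : ℕ → Bool) (j k : ℕ) : (pathL f j k).head? = some (3 * j) := by
  cases k <;> rfl

lemma pathL_getLast (f : ℕ → Bool) : ∀ k j, (pathL f j k).getLast? = some (3 * (j + k)) := by
  intro k
  induction k with
  | zero => intro j; simp [pathL]
  | succ k ih =>
    intro j
    obtain ⟨tl, htl⟩ := pathL_shape f (j + 1) k
    rw [pathL_succ, htl, List.getLast?_cons_cons, List.getLast?_cons_cons, ← htl, ih]
    ring_nf

lemma R_hub (j : ℕ) (r : ℕ) (hr : r = 1 ∨ r = 2) : R (3 * j) (3 * j + r) := by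
  unfold R; simp [Nat.mul_mod_right]; omega

lemma R_mid (j : ℕ) (r : ℕ) (hr : r = 1 ∨ r = 2) : R (3 * j + r) (3 * (j + 1)) := by
  unfold R; split <;> omega

lemma pathL_chain (f : ℕ → Bool) : ∀ k j, (pathL f j k).Chain' R := by
  intro k
  induction k with
  | zero => intro j; simp [pathL, List.Chain']
  | succ k ih =>
    intro j
    obtain ⟨tl, htl⟩ := pathL_shape f (j + 1) k
    rw [pathL_succ, htl]; unfold List.Chain'; rw [List.isChain_cons_cons, List.isChain_cons_cons, ← htl]
    refine ⟨R_hub j _ (by split <;> omega), R_mid j _ (by split <;> omega), ih (j + 1)⟩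

lemma pathL_sorted (f : ℕ → Bool) (j k : ℕ) : (pathL f j k).Chain' (· < ·) :=
  List.IsChain.imp (fun _ _ h => R_lt h) (pathL_chain f k j)

lemma pathL_nodup (f : ℕ → Bool) (j k : ℕ) : (pathL f j k).Nodup :=
  ((List.isChain_iff_pairwise).mp (pathL_sorted f j k)).imp (fun h => Nat.ne_of_lt h)

lemma pathL_mem_le (f : ℕ → Bool) : ∀ k j x, x ∈ pathL f j k → 3 * j ≤ x ∧ x ≤ 3 * (j + k) := by
  intro k
  induction k with
  | zero => intro j x hx; simp [pathL] at hx; omega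
  | succ k ih =>
    intro j x hx
    rw [pathL_succ] at hx
    simp at hx
    rcases hx with h | h | h
    · omega
    · split at h <;> omega
    · have := ih (j + 1) x h; omega


lemma pathL_zero (f : ℕ → Bool) (j : ℕ) : pathL f j 0 = [3 * j] := rfl

lemma pathL_congr {f g : ℕ → Bool} : ∀ k j, (∀ i, j ≤ i → i < j + k → f i = g i) →
    pathL f j k = pathL g j k := by
  intro k
  induction k with
  | zero => intro j _; rfl
  | succ k ih =>
    intro j h
    rw [pathL_succ, pathL_succ, h j le_rfl (by omega), ih (j + 1) (fun i h1 h2 => h i (by omega) (by omega))]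

lemma pathL_inj {f g : ℕ → Bool} : ∀ k j, pathL f j k = pathL g j k →
    ∀ i, j ≤ i → i < j + k → f i = g i := by
  intro k
  induction k with
  | zero => intro j _ i h1 h2; omega
  | succ k ih =>
    intro j h i h1 h2
    rw [pathL_succ, pathL_succ] at h
    simp only [List.cons.injEq] at h
    obtain ⟨-, h2', h3⟩ := h
    by_cases hij : i = j
    · subst hij
      cases hf : f i <;> cases hg : g i <;> simp [hf, hg] at h2' ⊢ <;> omega
    · exact ih (j + 1) h3 i (by omega) (by omega)

lemma char_hub (m : ℕ) : ∀ n (l : List ℕ), l.length ≤ n → ∀ j, l.Chain' R →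
    l.head? = some (3 * j) → l.getLast? = some (3 * m) →
    j ≤ m ∧ ∃ f, l = pathL f j (m - j) := by
  intro n
  induction n with
  | zero => intro l hl j _ hh _; cases l <;> simp_all
  | succ n ih =>
    intro l hl j hc hh hg
    match l with
    | [] => simp at hh
    | [a] =>
      have ha1 : a = 3 * j := by simpa using hh
      have ha2 : a = 3 * m := by simpa using hg
      have hj : j = m := by omega
      subst hj ha1
      exact ⟨le_rfl, fun _ => false, by simp [Nat.sub_self, pathL]⟩
    | a :: y :: rest2 =>
      have ha : a = 3 * j := by simpa using hh
      subst ha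
      have hR1 : R (3 * j) y := (List.isChain_cons_cons.mp hc).1
      have hy : y = 3 * j + 1 ∨ y = 3 * j + 2 := by
        unfold R at hR1; simpa [Nat.mul_mod_right] using hR1
      match rest2 with
      | [] =>
        exfalso
        have : y = 3 * m := by simpa using hg
        omega
      | z :: rest3 =>
        have hc2 : (y :: z :: rest3).Chain' R := (List.isChain_cons_cons.mp hc).2
        have hR2 : R y z := (List.isChain_cons_cons.mp hc2).1
        have hz : z = 3 * (j + 1) := by
          unfold R at hR2
          rcases hy with rfl | rfl <;> (split at hR2 <;> omega)
        have hc3 : (z :: rest3).Chain' R := (List.isChain_cons_cons.mp hc2).2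
        have hg3 : (z :: rest3).getLast? = some (3 * m) := by
          rw [List.getLast?_cons_cons, List.getLast?_cons_cons] at hg; exact hg
        obtain ⟨hjm, f, hf⟩ := ih (z :: rest3) (by simp only [List.length_cons] at hl ⊢; omega) (j + 1) hc3
          (by simp [hz]) hg3
        refine ⟨by omega, fun i => if i = j then decide (y = 3 * j + 2) else f i, ?_⟩
        have hmj : m - j = (m - (j + 1)) + 1 := by omega
        rw [hmj, pathL_succ]
        have hcongr : pathL (fun i => if i = j then decide (y = 3 * j + 2) else f i) (j + 1) (m - (j+1))
            = pathL f (j + 1) (m - (j + 1)) :=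
          pathL_congr _ _ (fun i h1 _ => by simp [show i ≠ j by omega])
        rw [hcongr, ← hf]
        rcases hy with rfl | rfl <;> simp


lemma pathCost_cons_cons {V : Type*} (w : V → V → ℝ) (a b : V) (l : List V) :
    pathCost w (a :: b :: l) = w a b + pathCost w (b :: l) := by
  simp [pathCost]

lemma perceived_cons_cons {V : Type*} (w : V → V → ℝ) (β : ℝ) (a b : V) (l : List V) :
    perceived w β (a :: b :: l) = w a b + β * pathCost w (b :: l) := by
  rfl

lemma pathCost_map {V V' : Type*} (φ : V → V') (w' : V' → V' → ℝ) (p : List V) :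
    pathCost (fun a b => w' (φ a) (φ b)) p = pathCost w' (p.map φ) := by
  induction p with
  | nil => rfl
  | cons a l ih =>
    cases l with
    | nil => rfl
    | cons b l' =>
      rw [pathCost_cons_cons, List.map_cons, List.map_cons, pathCost_cons_cons,
        show φ b :: l'.map φ = (b :: l').map φ from rfl, ih]

lemma perceived_map {V V' : Type*} (φ : V → V') (w' : V' → V' → ℝ) (β : ℝ) (p : List V) :
    perceived (fun a b => w' (φ a) (φ b)) β p = perceived w' β (p.map φ) := by
  match p with
  | [] => rfl
  | [a] => rfl
  | a :: b :: l =>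
    rw [perceived_cons_cons, List.map_cons, List.map_cons, perceived_cons_cons,
      show (φ b :: l.map φ) = (b :: l).map φ from rfl, ← pathCost_map]


lemma W_nonneg {β : ℝ} (hβ : 0 ≤ β) (x y : ℕ) : 0 ≤ W β x y := by
  unfold W
  split
  · split
    · positivity
    · exact le_rfl
  · split
    · positivity
    · exact le_rfl

def cost (β : ℝ) (f : ℕ → Bool) : ℕ → ℕ → ℝ
  | _, 0 => 0
  | j, k + 1 => (if f j then (2:ℝ) ^ j else β * 2 ^ j) + cost β f (j + 1) k

lemma W_hub1 (β : ℝ) (j : ℕ) : W β (3 * j) (3 * j + 1) = β * 2 ^ j := by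
  have h1 : (3 * j) % 3 = 0 := Nat.mul_mod_right 3 j
  have h2 : (3 * j) / 3 = j := by omega
  simp [W, h1, h2]

lemma W_hub2 (β : ℝ) (j : ℕ) : W β (3 * j) (3 * j + 2) = 0 := by
  have h1 : (3 * j) % 3 = 0 := Nat.mul_mod_right 3 j
  simp [W, h1]

lemma W_mid1 (β : ℝ) (j y : ℕ) : W β (3 * j + 1) y = 0 := by
  have h1 : (3 * j + 1) % 3 = 1 := by omega
  simp [W, h1]

lemma W_mid2 (β : ℝ) (j y : ℕ) : W β (3 * j + 2) y = (2:ℝ) ^ j := by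
  have h1 : (3 * j + 2) % 3 = 2 := by omega
  have h2 : (3 * j + 2) / 3 = j := by omega
  simp [W, h1, h2]

lemma pathCost_pathL (β : ℝ) (f : ℕ → Bool) : ∀ k j,
    pathCost (W β) (pathL f j k) = cost β f j k := by
  intro k
  induction k with
  | zero => intro j; simp [pathL, pathCost, cost]
  | succ k ih =>
    intro j
    obtain ⟨tl, htl⟩ := pathL_shape f (j + 1) k
    show pathCost (W β) (3 * j :: (3 * j + (if f j then 2 else 1)) :: pathL f (j+1) k) = _
    rw [pathCost_cons_cons, htl, pathCost_cons_cons, ← htl, ih (j + 1)]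
    show _ = (if f j then (2:ℝ) ^ j else β * 2 ^ j) + cost β f (j + 1) k
    cases hf : f j <;> simp only [hf, if_true, if_false, Bool.false_eq_true]
    · rw [W_hub1, W_mid1]; ring
    · rw [W_hub2, W_mid2]; ring

lemma perceived_pathL (β : ℝ) (f : ℕ → Bool) (j k : ℕ) :
    perceived (W β) β (pathL f j (k + 1)) = β * 2 ^ j + β * cost β f (j + 1) k := by
  obtain ⟨tl, htl⟩ := pathL_shape f (j + 1) k
  show perceived (W β) β (3 * j :: (3 * j + (if f j then 2 else 1)) :: pathL f (j+1) k) = _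
  rw [perceived_cons_cons, htl, pathCost_cons_cons, ← htl, pathCost_pathL]
  cases hf : f j <;> simp only [hf, if_true, if_false, Bool.false_eq_true]
  · rw [W_hub1, W_mid1]; ring
  · rw [W_hub2, W_mid2]; ring

lemma perceived_mid (β : ℝ) (f : ℕ → Bool) (j k r : ℕ) :
    perceived (W β) β ((3 * j + r) :: pathL f (j + 1) k)
      = W β (3 * j + r) (3 * (j + 1)) + β * cost β f (j + 1) k := by
  obtain ⟨tl, htl⟩ := pathL_shape f (j + 1) k
  rw [htl, perceived_cons_cons, ← htl, pathCost_pathL]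

lemma cost_bounds {β : ℝ} (hβ0 : 0 < β) (hβ1 : β < 1) (f : ℕ → Bool) : ∀ k j,
    β * ((2:ℝ) ^ (j + k) - 2 ^ j) ≤ cost β f j k ∧ cost β f j k ≤ (2:ℝ) ^ (j + k) - 2 ^ j := by
  intro k
  induction k with
  | zero => intro j; simp [cost]
  | succ k ih =>
    intro j
    obtain ⟨ih1, ih2⟩ := ih (j + 1)
    have hp : (0:ℝ) < 2 ^ j := by positivity
    have he : (2:ℝ) ^ (j + 1) = 2 * 2 ^ j := by rw [pow_succ]; ring
    have he2 : (2:ℝ) ^ (j + (k + 1)) = 2 ^ (j + 1 + k) := by ring_nf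
    have hterm : β * 2 ^ j ≤ (if f j then (2:ℝ) ^ j else β * 2 ^ j) ∧
        (if f j then (2:ℝ) ^ j else β * 2 ^ j) ≤ 2 ^ j := by
      split <;> constructor <;> nlinarith
    show _ ≤ (if f j then (2:ℝ) ^ j else β * 2 ^ j) + cost β f (j + 1) k ∧
        (if f j then (2:ℝ) ^ j else β * 2 ^ j) + cost β f (j + 1) k ≤ _
    constructor
    · rw [he2]; nlinarith [hterm.1]
    · rw [he2]; nlinarith [hterm.2]

lemma cost_false (β : ℝ) (f : ℕ → Bool) : ∀ k j, (∀ i, j ≤ i → i < j + k → f i = false) →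
    cost β f j k = β * ((2:ℝ) ^ (j + k) - 2 ^ j) := by
  intro k
  induction k with
  | zero => intro j _; simp [cost]
  | succ k ih =>
    intro j h
    have hfj : f j = false := h j le_rfl (by omega)
    show (if f j then (2:ℝ) ^ j else β * 2 ^ j) + cost β f (j + 1) k = _
    rw [hfj, if_neg (by simp), ih (j + 1) (fun i h1 h2 => h i (by omega) (by omega))]
    have he : (2:ℝ) ^ (j + 1) = 2 * 2 ^ j := by rw [pow_succ]; ring
    have he2 : (2:ℝ) ^ (j + (k + 1)) = 2 ^ (j + 1 + k) := by ring_nf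
    rw [he2, he]; ring

lemma cost_split (β : ℝ) (f : ℕ → Bool) : ∀ k j,
    cost β f j (k + 1) = cost β f j k + (if f (j + k) then (2:ℝ) ^ (j + k) else β * 2 ^ (j + k)) := by
  intro k
  induction k with
  | zero =>
    intro j
    show (if f j then (2:ℝ) ^ j else β * 2 ^ j) + cost β f (j + 1) 0 = cost β f j 0 + _
    simp [cost]
  | succ k ih =>
    intro j
    show (if f j then (2:ℝ) ^ j else β * 2 ^ j) + cost β f (j + 1) (k + 1) = _
    rw [ih (j + 1)]
    show _ = (if f j then (2:ℝ) ^ j else β * 2 ^ j) + cost β f (j + 1) k + _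
    have : j + 1 + k = j + (k + 1) := by omega
    rw [this]; ring

lemma cost_inj {β : ℝ} (hβ0 : 0 < β) (hβ1 : β < 1) (f g : ℕ → Bool) : ∀ k j,
    cost β f j k = cost β g j k → ∀ i, j ≤ i → i < j + k → f i = g i := by
  intro k
  induction k with
  | zero => intro j _ i h1 h2; omega
  | succ k ih =>
    intro j h i h1 h2
    rw [cost_split, cost_split] at h
    obtain ⟨lf, uf⟩ := cost_bounds hβ0 hβ1 f k j
    obtain ⟨lg, ug⟩ := cost_bounds hβ0 hβ1 g k j
    have hp : (0:ℝ) < 2 ^ j := by positivity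
    have hp2 : (0:ℝ) < 2 ^ (j + k) := by positivity
    have htop : f (j + k) = g (j + k) := by
      by_contra hne
      cases hf : f (j + k) <;> cases hg : g (j + k) <;>
          rw [hf, hg] at h <;>
          simp only [if_true, if_false, Bool.false_eq_true] at h <;>
        first
          | exact hne (hf.trans hg.symm)
          | nlinarith
    have hcost : cost β f j k = cost β g j k := by
      rw [htop] at h; linarith
    rcases Nat.lt_or_ge i (j + k) with hik | hik
    · exact ih j hcost i h1 hik
    · have : i = j + k := by omega
      rw [this]; exact htop


/-! ### ℕ-level extras -/

lemma char_mid (m j r : ℕ) (hr : r = 1 ∨ r = 2) (l : List ℕ) (hc : l.Chain' R)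
    (hh : l.head? = some (3 * j + r)) (hg : l.getLast? = some (3 * m)) :
    j + 1 ≤ m ∧ ∃ f, l = (3 * j + r) :: pathL f (j + 1) (m - (j + 1)) := by
  match l with
  | [] => simp at hh
  | [a] =>
    have h1 : a = 3 * j + r := by simpa using hh
    have h2 : a = 3 * m := by simpa using hg
    omega
  | a :: z :: rest =>
    have ha : a = 3 * j + r := by simpa using hh
    subst ha
    have hR : R (3 * j + r) z := (List.isChain_cons_cons.mp hc).1
    have hz : z = 3 * (j + 1) := by
      unfold R at hR
      rcases hr with rfl | rfl <;> (split at hR <;> omega)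
    have hc2 : (z :: rest).Chain' R := (List.isChain_cons_cons.mp hc).2
    have hg2 : (z :: rest).getLast? = some (3 * m) := by
      rw [List.getLast?_cons_cons] at hg; exact hg
    obtain ⟨hjm, f, hf⟩ := char_hub m (z :: rest).length (z :: rest) le_rfl (j + 1) hc2
      (by simp [hz]) hg2
    exact ⟨hjm, f, by rw [← hf]⟩

lemma pathCost_congr {V : Type*} {w1 w2 : V → V → ℝ} : ∀ l : List V,
    (∀ x ∈ l, ∀ y ∈ l, w1 x y = w2 x y) → pathCost w1 l = pathCost w2 l := by
  intro l
  induction l with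
  | nil => intro _; rfl
  | cons a l ih =>
    intro h
    cases l with
    | nil => rfl
    | cons b l' =>
      rw [pathCost_cons_cons, pathCost_cons_cons,
        h a (by simp) b (by simp),
        ih (fun x hx y hy => h x (by simp [hx]) y (by simp [hy]))]

lemma perceived_congr {V : Type*} {w1 w2 : V → V → ℝ} (β : ℝ) : ∀ l : List V,
    (∀ x ∈ l, ∀ y ∈ l, w1 x y = w2 x y) → perceived w1 β l = perceived w2 β l := by
  intro l h
  match l with
  | [] => rfl
  | [a] => rfl
  | a :: b :: l' =>
    rw [perceived_cons_cons, perceived_cons_cons, h a (by simp) b (by simp),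
      pathCost_congr (b :: l') (fun x hx y hy => h x (by simp [hx]) y (by simp [hy]))]


/-! ### Fin level -/

section FinLevel

variable (m : ℕ)

def EE (a b : Fin (3 * m + 1)) : Prop := R a.val b.val
def ww (β : ℝ) (a b : Fin (3 * m + 1)) : ℝ := W β a.val b.val
def Q (f : ℕ → Bool) (j k : ℕ) : List (Fin (3 * m + 1)) :=
  (pathL f j k).map (Nat.cast : ℕ → Fin (3 * m + 1))

lemma vv {x : ℕ} (h : x ≤ 3 * m) : ((x : Fin (3 * m + 1)) : ℕ) = x :=
  Fin.val_cast_of_lt (by omega)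

lemma Q_mapval {f : ℕ → Bool} {j k : ℕ} (h : j + k ≤ m) :
    (Q m f j k).map Fin.val = pathL f j k := by
  unfold Q
  rw [List.map_map]
  nth_rewrite 2 [← List.map_id (pathL f j k)]
  apply List.map_congr_left
  intro x hx
  have := pathL_mem_le f k j x hx
  exact vv m (by omega)

lemma Q_shape (f : ℕ → Bool) (j k : ℕ) :
    ∃ tl, Q m f j k = ((3 * j : ℕ) : Fin (3 * m + 1)) :: tl := by
  obtain ⟨tl, htl⟩ := pathL_shape f j k
  exact ⟨tl.map _, by rw [Q, htl, List.map_cons]⟩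

lemma chain'_strengthen {α : Type*} {S T : α → α → Prop} : ∀ (l : List α), l.Chain' S →
    (∀ x ∈ l, ∀ y ∈ l, S x y → T x y) → l.Chain' T := by
  intro l
  induction l with
  | nil => intro _ _; simp [List.Chain']
  | cons a l ih =>
    intro hc h
    cases l with
    | nil => simp [List.Chain']
    | cons b l' =>
      unfold List.Chain' at hc ⊢; rw [List.isChain_cons_cons] at hc ⊢
      exact ⟨h a (by simp) b (by simp) hc.1,
        ih hc.2 (fun x hx y hy => h x (by simp [hx]) y (by simp [hy]))⟩


lemma chain'E_Q (f : ℕ → Bool) {j k : ℕ} (h : j + k ≤ m) : (Q m f j k).Chain' (EE m) := by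
  rw [Q]; unfold List.Chain'; rw [List.isChain_map]
  refine chain'_strengthen _ (pathL_chain f k j) ?_
  intro x hx y hy hxy
  have h1 := pathL_mem_le f k j x hx
  have h2 := pathL_mem_le f k j y hy
  show R _ _
  rwa [vv m (by omega), vv m (by omega)]


lemma isPathOn_Q (f : ℕ → Bool) {j k : ℕ} (h : j + k = m) :
    IsPathOn (EE m) ((3 * j : ℕ) : Fin (3 * m + 1)) ((3 * m : ℕ) : Fin (3 * m + 1)) (Q m f j k) := by
  have hb : ∀ x ∈ pathL f j k, x ≤ 3 * m := fun x hx => by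
    have := pathL_mem_le f k j x hx; omega
  refine ⟨?_, ?_, ?_, ?_⟩
  · rw [Q, List.head?_map, pathL_head]; rfl
  · rw [Q, List.getLast?_map, pathL_getLast, h]; rfl
  · exact chain'E_Q m f (le_of_eq h)
  · exact (pathL_nodup f j k).map_on (fun x hx y hy hxy => by
      have := congrArg Fin.val hxy
      rwa [vv m (hb x hx), vv m (hb y hy)] at this)

lemma char_Q {j : ℕ} (hj : j ≤ m) (p : List (Fin (3 * m + 1)))
    (hp : IsPathOn (EE m) ((3 * j : ℕ) : Fin (3 * m + 1)) ((3 * m : ℕ) : Fin (3 * m + 1)) p) :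
    ∃ f, p = Q m f j (m - j) := by
  obtain ⟨hh, hg, hc, -⟩ := hp
  have hh' : (p.map Fin.val).head? = some (3 * j) := by
    rw [List.head?_map, hh, Option.map_some, vv m (by omega)]
  have hg' : (p.map Fin.val).getLast? = some (3 * m) := by
    rw [List.getLast?_map, hg, Option.map_some, vv m (by omega)]
  have hc' : (p.map Fin.val).Chain' R := by
    unfold List.Chain'; rw [List.isChain_map]; exact hc
  obtain ⟨-, f, hf⟩ := char_hub m _ _ le_rfl j hc' hh' hg'
  refine ⟨f, List.map_injective_iff.mpr Fin.val_injective ?_⟩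
  rw [hf, Q_mapval m (by omega)]

lemma char_Q_mid {j r : ℕ} (hj : j < m) (hr : r = 1 ∨ r = 2) (p : List (Fin (3 * m + 1)))
    (hp : IsPathOn (EE m) ((3 * j + r : ℕ) : Fin (3 * m + 1)) ((3 * m : ℕ) : Fin (3 * m + 1)) p) :
    ∃ f, p = ((3 * j + r : ℕ) : Fin (3 * m + 1)) :: Q m f (j + 1) (m - (j + 1)) := by
  obtain ⟨hh, hg, hc, -⟩ := hp
  have hr3 : 3 * j + r ≤ 3 * m := by omega
  have hh' : (p.map Fin.val).head? = some (3 * j + r) := by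
    rw [List.head?_map, hh, Option.map_some, vv m hr3]
  have hg' : (p.map Fin.val).getLast? = some (3 * m) := by
    rw [List.getLast?_map, hg, Option.map_some, vv m (by omega)]
  have hc' : (p.map Fin.val).Chain' R := by
    unfold List.Chain'; rw [List.isChain_map]; exact hc
  obtain ⟨-, f, hf⟩ := char_mid m j r hr _ hc' hh' hg'
  refine ⟨f, List.map_injective_iff.mpr Fin.val_injective ?_⟩
  rw [hf, List.map_cons, Q_mapval m (by omega), vv m hr3]

lemma pathCost_Q (β : ℝ) (f : ℕ → Bool) {j k : ℕ} (h : j + k ≤ m) :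
    pathCost (ww m β) (Q m f j k) = cost β f j k := by
  rw [Q, ← pathCost_map (Nat.cast : ℕ → Fin (3 * m + 1)) (ww m β) (pathL f j k),
    pathCost_congr (w2 := W β) _ ?_, pathCost_pathL]
  intro x hx y hy
  have h1 := pathL_mem_le f k j x hx
  have h2 := pathL_mem_le f k j y hy
  show W β _ _ = _
  rw [vv m (by omega), vv m (by omega)]

lemma perceived_Q (β : ℝ) (f : ℕ → Bool) {j k : ℕ} (h : j + k + 1 ≤ m) :
    perceived (ww m β) β (Q m f j (k + 1)) = β * 2 ^ j + β * cost β f (j + 1) k := by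
  rw [Q, ← perceived_map (Nat.cast : ℕ → Fin (3 * m + 1)) (ww m β) β (pathL f j (k + 1)),
    perceived_congr (w2 := W β) β _ ?_, perceived_pathL]
  intro x hx y hy
  have h1 := pathL_mem_le f (k + 1) j x hx
  have h2 := pathL_mem_le f (k + 1) j y hy
  show W β _ _ = _
  rw [vv m (by omega), vv m (by omega)]

lemma perceived_Q_mid (β : ℝ) (f : ℕ → Bool) {j k r : ℕ} (hjk : j + 1 + k ≤ m) (hr : r ≤ 2) :
    perceived (ww m β) β (((3 * j + r : ℕ) : Fin (3 * m + 1)) :: Q m f (j + 1) k)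
      = W β (3 * j + r) (3 * (j + 1)) + β * cost β f (j + 1) k := by
  have : ((3 * j + r : ℕ) : Fin (3 * m + 1)) :: Q m f (j + 1) k
      = ((3 * j + r) :: pathL f (j + 1) k).map (Nat.cast : ℕ → Fin (3 * m + 1)) := by
    rw [List.map_cons]; rfl
  rw [this, ← perceived_map (Nat.cast : ℕ → Fin (3 * m + 1)) (ww m β) β,
    perceived_congr (w2 := W β) β _ ?_, perceived_mid]
  intro x hx y hy
  have hb : ∀ z ∈ (3 * j + r) :: pathL f (j + 1) k, z ≤ 3 * m := by
    intro z hz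
    rcases List.mem_cons.mp hz with rfl | hz
    · omega
    · have := pathL_mem_le f k (j + 1) z hz; omega
  show W β _ _ = _
  rw [vv m (hb x hx), vv m (hb y hy)]


def fhub (j r : ℕ) : ℕ → Bool := fun i => decide (i = j ∧ r = 2)

lemma feas_hub {β : ℝ} (hβ0 : 0 < β) (hβ1 : β < 1) {j : ℕ} (hj : j < m) {r : ℕ}
    (hr : r = 1 ∨ r = 2) :
    FeasibleStep (EE m) (ww m β) β ((3 * m : ℕ) : Fin (3 * m + 1))
      ((3 * j : ℕ) : Fin (3 * m + 1)) ((3 * j + r : ℕ) : Fin (3 * m + 1)) := by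
  set k := m - (j + 1) with hk
  have hsplit : m - j = k + 1 := by omega
  have hjk : j + (k + 1) = m := by omega
  have hr' : (if fhub j r j then 2 else 1) = r := by
    rcases hr with rfl | rfl <;> simp [fhub]
  have hshape : Q m (fhub j r) j (m - j)
      = ((3 * j : ℕ) : Fin (3 * m + 1)) :: ((3 * j + r : ℕ) : Fin (3 * m + 1))
        :: Q m (fhub j r) (j + 1) k := by
    rw [hsplit, Q, pathL_succ, hr', List.map_cons, List.map_cons]; rfl
  constructor
  · show R _ _
    rw [vv m (by omega), vv m (by omega)]
    exact R_hub j r hr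
  · refine ⟨Q m (fhub j r) (j + 1) k, ?_, ?_⟩
    · rw [← hshape, hsplit]; exact isPathOn_Q m (fhub j r) hjk
    · intro rr hrr
      obtain ⟨g, rfl⟩ := char_Q m (le_of_lt hj) rr hrr
      rw [← hshape, hsplit, perceived_Q m β _ (by omega), perceived_Q m β _ (by omega)]
      have hf0 : cost β (fhub j r) (j + 1) k = β * ((2:ℝ) ^ (j + 1 + k) - 2 ^ (j + 1)) :=
        cost_false β _ k (j + 1) (fun i h1 h2 => by simp [fhub]; omega)
      have hg := (cost_bounds hβ0 hβ1 g k (j + 1)).1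
      rw [hf0]
      nlinarith [hg, hβ0.le]

lemma Q_false_getLast (k j : ℕ) (f : ℕ → Bool) (h : j + k = m) :
    (Q m f j k).getLast? = some ((3 * m : ℕ) : Fin (3 * m + 1)) :=
  (isPathOn_Q m f h).2.1

lemma feas_mid {β : ℝ} (hβ0 : 0 < β) (hβ1 : β < 1) {j : ℕ} (hj : j < m) {r : ℕ}
    (hr : r = 1 ∨ r = 2) :
    FeasibleStep (EE m) (ww m β) β ((3 * m : ℕ) : Fin (3 * m + 1))
      ((3 * j + r : ℕ) : Fin (3 * m + 1)) ((3 * (j + 1) : ℕ) : Fin (3 * m + 1)) := by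
  set k := m - (j + 1) with hk
  have hjk : j + 1 + k = m := by omega
  set f0 : ℕ → Bool := fun _ => false with hf0def
  obtain ⟨tl, htl⟩ := Q_shape m f0 (j + 1) k
  have hE : EE m ((3 * j + r : ℕ) : Fin (3 * m + 1)) ((3 * (j + 1) : ℕ) : Fin (3 * m + 1)) := by
    show R _ _
    rw [vv m (by omega), vv m (by omega)]
    exact R_mid j r hr
  have hpath := isPathOn_Q m f0 hjk
  have hnotmem : ((3 * j + r : ℕ) : Fin (3 * m + 1)) ∉ Q m f0 (j + 1) k := by
    intro hmem
    obtain ⟨x, hx, hcast⟩ := List.mem_map.mp hmem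
    have hxb := pathL_mem_le f0 k (j + 1) x hx
    have := congrArg Fin.val hcast
    rw [vv m (by omega), vv m (by omega)] at this
    omega
  have hipo : IsPathOn (EE m) ((3 * j + r : ℕ) : Fin (3 * m + 1))
      ((3 * m : ℕ) : Fin (3 * m + 1))
      (((3 * j + r : ℕ) : Fin (3 * m + 1)) :: Q m f0 (j + 1) k) := by
    refine ⟨rfl, ?_, ?_, ?_⟩
    · rw [htl, List.getLast?_cons_cons, ← htl]; exact hpath.2.1
    · rw [htl]; unfold List.Chain'; rw [List.isChain_cons_cons, ← htl]
      exact ⟨hE, hpath.2.2.1⟩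
    · exact List.nodup_cons.mpr ⟨hnotmem, hpath.2.2.2⟩
  constructor
  · exact hE
  · refine ⟨tl, by rw [← htl]; exact hipo, ?_⟩
    intro rr hrr
    obtain ⟨g, rfl⟩ := char_Q_mid m hj hr rr hrr
    rw [← htl,
      perceived_Q_mid m β f0 (by omega) (by omega),
      perceived_Q_mid m β g (by omega) (by omega)]
    have hf0 : cost β f0 (j + 1) k = β * ((2:ℝ) ^ (j + 1 + k) - 2 ^ (j + 1)) :=
      cost_false β _ k (j + 1) (fun i h1 h2 => rfl)
    have hg := (cost_bounds hβ0 hβ1 g k (j + 1)).1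
    rw [hf0]
    nlinarith [hg, hβ0.le]

lemma feasChain {β : ℝ} (hβ0 : 0 < β) (hβ1 : β < 1) : ∀ k j (f : ℕ → Bool), j + k = m →
    (Q m f j k).Chain' (FeasibleStep (EE m) (ww m β) β ((3 * m : ℕ) : Fin (3 * m + 1))) := by
  intro k
  induction k with
  | zero =>
    intro j f h
    show ((pathL f j 0).map _).Chain' _
    rw [pathL_zero]
    simp [List.Chain']
  | succ k ih =>
    intro j f h
    have hj : j < m := by omega
    set r : ℕ := if f j then 2 else 1 with hrdef
    have hr : r = 1 ∨ r = 2 := by rw [hrdef]; split <;> omega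
    have hshape : Q m f j (k + 1)
        = ((3 * j : ℕ) : Fin (3 * m + 1)) :: ((3 * j + r : ℕ) : Fin (3 * m + 1))
          :: Q m f (j + 1) k := by
      rw [Q, pathL_succ, List.map_cons, List.map_cons]; rfl
    obtain ⟨tl, htl⟩ := Q_shape m f (j + 1) k
    rw [hshape]; unfold List.Chain'; rw [List.isChain_cons_cons, htl, List.isChain_cons_cons, ← htl]
    exact ⟨feas_hub m hβ0 hβ1 hj hr, feas_mid m hβ0 hβ1 hj hr,
      ih (j + 1) f (by omega)⟩

lemma EE_lt {a b : Fin (3 * m + 1)} (h : Relation.TransGen (EE m) a b) : a.val < b.val := by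
  induction h with
  | single h => exact R_lt h
  | tail _ h ih => exact lt_trans ih (R_lt h)

end FinLevel

end S0

open S0

/-- For every `m ≥ 1` and present bias `0 < β < 1` there is a
time-inconsistent planning model on exactly `3m+1` vertices, with nonnegative
edge weights, in which every directed `s`–`t` path is feasible, there are
exactly `2^m` directed `s`–`t` paths, and their costs are pairwise distinct. -/
theorem stmt0 (m : ℕ) (hm : 1 ≤ m) (β : ℝ) (hβ0 : 0 < β) (hβ1 : β < 1) :
    ∃ (V : Type) (_ : Fintype V) (E : V → V → Prop) (w : V → V → ℝ) (s t : V),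
      NoDirCycle E ∧
      Fintype.card V = 3 * m + 1 ∧
      (∀ a b, E a b → 0 ≤ w a b) ∧
      (∀ p, IsPathOn E s t p → FeasPath E w β s t p) ∧
      {p : List V | IsPathOn E s t p}.Finite ∧
      {p : List V | IsPathOn E s t p}.ncard = 2 ^ m ∧
      Set.InjOn (pathCost w) {p : List V | IsPathOn E s t p} := by
  refine ⟨Fin (3 * m + 1), inferInstance, EE m, ww m β,
    ((3 * 0 : ℕ) : Fin (3 * m + 1)), ((3 * m : ℕ) : Fin (3 * m + 1)), ?_, ?_, ?_, ?_, ?_⟩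
  · intro v hv
    exact lt_irrefl _ (EE_lt m hv)
  · exact Fintype.card_fin _
  · intro a b _
    exact W_nonneg hβ0.le _ _
  · intro p hp
    obtain ⟨f, rfl⟩ := char_Q m (Nat.zero_le m) p hp
    exact ⟨hp, by
      have := feasChain m hβ0 hβ1 (m - 0) 0 f (by omega)
      exact this⟩
  -- counting + injOn
  · set ext : (Fin m → Bool) → ℕ → Bool := fun g i => if h : i < m then g ⟨i, h⟩ else false
      with hextdef
    set F : (Fin m → Bool) → List (Fin (3 * m + 1)) := fun g => Q m (ext g) 0 m with hFdef
    have hrange : {p : List (Fin (3 * m + 1)) |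
        IsPathOn (EE m) ((3 * 0 : ℕ) : Fin (3 * m + 1)) ((3 * m : ℕ) : Fin (3 * m + 1)) p}
        = Set.range F := by
      ext p
      constructor
      · intro hp
        obtain ⟨f, rfl⟩ := char_Q m (Nat.zero_le m) p hp
        refine ⟨fun i => f i.val, ?_⟩
        show Q m (ext fun i => f i.val) 0 m = Q m f 0 (m - 0)
        rw [Nat.sub_zero, Q, Q]
        congr 1
        exact pathL_congr m 0 (fun i _ h2 => by simp [hextdef, show i < m by omega])
      · rintro ⟨g, rfl⟩
        have := isPathOn_Q m (ext g) (by omega : 0 + m = m)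
        exact this
    have hFinj : Function.Injective F := by
      intro g1 g2 hg
      have h1 : pathL (ext g1) 0 m = pathL (ext g2) 0 m := by
        have := congrArg (List.map Fin.val) hg
        rwa [hFdef, Q_mapval m (by omega), Q_mapval m (by omega)] at this
      funext i
      have := pathL_inj m 0 h1 i.val (Nat.zero_le _) (by omega)
      simpa [hextdef, i.isLt] using this
    refine ⟨hrange ▸ Set.finite_range F, ?_, ?_⟩
    · rw [hrange, ← Set.image_univ, ← Finset.coe_univ, ← Finset.coe_image,
        Set.ncard_coe_finset, Finset.card_image_of_injective _ hFinj, Finset.card_univ]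
      simp
    · intro p1 hp1 p2 hp2 hcost
      rw [Set.mem_setOf_eq] at hp1 hp2
      obtain ⟨f1, rfl⟩ := char_Q m (Nat.zero_le m) p1 hp1
      obtain ⟨f2, rfl⟩ := char_Q m (Nat.zero_le m) p2 hp2
      rw [pathCost_Q m β f1 (by omega), pathCost_Q m β f2 (by omega)] at hcost
      rw [Q, Q]
      congr 1
      exact pathL_congr (m - 0) 0
        (fun i h1 h2 => cost_inj hβ0 hβ1 f1 f2 (m - 0) 0 hcost i h1 h2)
end

section
/- In the diamond-chain graph built from positive integers s₁, …, s_n, an integer W > max_i s_i, and a real β with 0 < β < 1, every edge is a feasible transition; consequently, every directed s–t path of the diamond-chain graph is feasible. -/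
/-!
Common definitions for time-inconsistent planning models (Kleinberg–Oren).
A task graph is given by a finite vertex type `V`, an edge relation
`E : V → V → Prop` and edge weights `w : V → V → ℝ`.  A directed path is
represented by the list of its vertices (nonempty, consecutive vertices joined
by edges, no repeated vertices).
-/

variable {V : Type*}

/-- Vertices of the diamond-chain graph built on `n` diamonds: `v i` for
`i ∈ {0,…,n}` and, for each diamond `i ∈ {1,…,n}` (indexed by `Fin n`,
diamond `i` ↔ index `i-1`), the two middle vertices `u (i-1) true = u_i`
(upper branch) and `u (i-1) false = u'_i` (lower branch). -/
inductive DV (n : ℕ) : Type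
  | v (i : Fin (n + 1))
  | u (i : Fin n) (upper : Bool)

/-- Edges of the diamond-chain graph:
`v_{i-1} → u_i`, `v_{i-1} → u'_i`, `u_i → v_i`, `u'_i → v_i`. -/
def DE (n : ℕ) : DV n → DV n → Prop
  | DV.v j, DV.u i _ => (j : ℕ) = (i : ℕ)
  | DV.u i _, DV.v j => (j : ℕ) = (i : ℕ) + 1
  | _, _ => False

/-- Edge weights of the diamond-chain graph built from the integers `sv i`
(`s_i` of the paper), `W` and present bias `β`:
`v_{i-1}→u_i` has weight `s_i`, `u_i→v_i` has weight `(W-s_i)/β`,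
`v_{i-1}→u'_i` has weight `-s_i`, and `u'_i→v_i` has weight `(W+s_i)/β`. -/
noncomputable def Dw (n : ℕ) (sv : Fin n → ℤ) (W : ℤ) (β : ℝ) : DV n → DV n → ℝ
  | DV.v _, DV.u i true => (sv i : ℝ)
  | DV.v _, DV.u i false => -(sv i : ℝ)
  | DV.u i true, DV.v _ => ((W : ℝ) - (sv i : ℝ)) / β
  | DV.u i false, DV.v _ => ((W : ℝ) + (sv i : ℝ)) / β
  | _, _ => 0

namespace Stmt3Aux

/-- index of a vertex -/
def idx {n : ℕ} : DV n → ℕ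
  | .v i => i
  | .u i _ => i

noncomputable def gc (n : ℕ) (sv : Fin n → ℤ) (W : ℤ) (β : ℝ) (i : ℕ) : ℝ :=
  if h : i < n then (sv ⟨i, h⟩ : ℝ) + ((W : ℝ) - (sv ⟨i, h⟩ : ℝ)) / β else 0

noncomputable def Cc (n : ℕ) (sv : Fin n → ℤ) (W : ℤ) (β : ℝ) (j : ℕ) : ℝ :=
  ∑ i ∈ Finset.Ico j n, gc n sv W β i

lemma Cc_n (n : ℕ) (sv : Fin n → ℤ) (W : ℤ) (β : ℝ) (j : ℕ) (h : n ≤ j) :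
    Cc n sv W β j = 0 := by
  simp [Cc, Finset.Ico_eq_empty_iff.mpr (by omega : ¬ j < n)]

lemma Cc_succ (n : ℕ) (sv : Fin n → ℤ) (W : ℤ) (β : ℝ) (j : ℕ) (h : j < n) :
    Cc n sv W β j = gc n sv W β j + Cc n sv W β (j+1) := by
  simp [Cc, Finset.sum_eq_sum_Ico_succ_bot h]

/-- canonical all-upper path from `v j` to `v n`, with fuel `k = n - j`. -/
def up (n : ℕ) : (k j : ℕ) → j + k = n → List (DV n)
  | 0, _, _ => [DV.v (Fin.last n)]
  | k+1, j, h => DV.v ⟨j, by omega⟩ :: DV.u ⟨j, by omega⟩ true :: up n k (j+1) (by omega)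

lemma pathCost_cons₂ {V : Type*} (w : V → V → ℝ) (a b : V) (l : List V) :
    pathCost w (a :: b :: l) = w a b + pathCost w (b :: l) := by
  simp [pathCost]

lemma pathCost_single {V : Type*} (w : V → V → ℝ) (a : V) :
    pathCost w [a] = 0 := by
  simp [pathCost]

lemma perceived_cons₂ {V : Type*} (w : V → V → ℝ) (β : ℝ) (a b : V) (l : List V) :
    perceived w β (a :: b :: l) = w a b + β * pathCost w (b :: l) := by
  simp [perceived, pathCost]

lemma up_eq_cons (n k j : ℕ) (h : j + k = n) (hj : j < n + 1) :
    up n k j h = DV.v ⟨j, hj⟩ :: (up n k j h).tail := by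
  cases k with
  | zero =>
      have : Fin.last n = ⟨j, hj⟩ := by ext; simp [Fin.last]; omega
      simp [up, this]
  | succ k => rfl

lemma up_mem_idx (n : ℕ) : ∀ (k j : ℕ) (h : j + k = n) (x : DV n),
    x ∈ up n k j h → j ≤ idx x := by
  intro k
  induction k with
  | zero =>
      intro j h x hx
      simp [up] at hx
      subst hx
      simp [idx, Fin.last]
      omega
  | succ k ih =>
      intro j h x hx
      simp only [up, List.mem_cons] at hx
      rcases hx with rfl | rfl | hx
      · simp [idx]
      · simp [idx]
      · have := ih (j+1) (by omega) x hx
        omega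

lemma up_nodup (n : ℕ) : ∀ (k j : ℕ) (h : j + k = n), (up n k j h).Nodup := by
  intro k
  induction k with
  | zero => intro j h; simp [up]
  | succ k ih =>
      intro j h
      simp only [up, List.nodup_cons]
      refine ⟨?_, ?_, ih (j+1) (by omega)⟩
      · simp only [List.mem_cons]
        push_neg
        refine ⟨by simp, fun hx => ?_⟩
        have := up_mem_idx n k (j+1) (by omega) _ hx
        simp [idx] at this
      · intro hx
        have := up_mem_idx n k (j+1) (by omega) _ hx
        simp [idx] at this

lemma up_getLast (n : ℕ) : ∀ (k j : ℕ) (h : j + k = n),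
    (up n k j h).getLast? = some (DV.v (Fin.last n)) := by
  intro k
  induction k with
  | zero => intro j h; rfl
  | succ k ih =>
      intro j h
      rw [show up n (k+1) j h = DV.v ⟨j, by omega⟩ :: DV.u ⟨j, by omega⟩ true
            :: up n k (j+1) (by omega) from rfl]
      rw [up_eq_cons n k (j+1) (by omega) (by omega), List.getLast?_cons_cons,
        List.getLast?_cons_cons, ← up_eq_cons n k (j+1) (by omega) (by omega)]
      exact ih (j+1) (by omega)

lemma up_chain (n : ℕ) : ∀ (k j : ℕ) (h : j + k = n), (up n k j h).Chain' (DE n) := by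
  intro k
  induction k with
  | zero => intro j h; exact List.isChain_singleton _
  | succ k ih =>
      intro j h
      rw [show up n (k+1) j h = DV.v ⟨j, by omega⟩ :: DV.u ⟨j, by omega⟩ true
            :: up n k (j+1) (by omega) from rfl]
      rw [up_eq_cons n k (j+1) (by omega) (by omega)]
      refine List.IsChain.cons_cons (by simp [DE]) (List.IsChain.cons_cons (by simp [DE]) ?_)
      rw [← up_eq_cons n k (j+1) (by omega) (by omega)]
      exact ih (j+1) (by omega)

lemma up_cost (n : ℕ) (sv : Fin n → ℤ) (W : ℤ) (β : ℝ) :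
    ∀ (k j : ℕ) (h : j + k = n),
    pathCost (Dw n sv W β) (up n k j h) = Cc n sv W β j := by
  intro k
  induction k with
  | zero =>
      intro j h
      rw [show up n 0 j h = [DV.v (Fin.last n)] from rfl, pathCost_single,
        Cc_n n sv W β j (by omega)]
  | succ k ih =>
      intro j h
      have hj : j < n := by omega
      rw [show up n (k+1) j h = DV.v ⟨j, by omega⟩ :: DV.u ⟨j, by omega⟩ true
            :: up n k (j+1) (by omega) from rfl]
      rw [pathCost_cons₂, up_eq_cons n k (j+1) (by omega) (by omega), pathCost_cons₂,
        ← up_eq_cons n k (j+1) (by omega) (by omega), ih (j+1) (by omega),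
        Cc_succ n sv W β j hj]
      simp [Dw, gc, hj]
      ring

/-- one-step decomposition of a path starting at a `u`-vertex -/
lemma decomp_u (n : ℕ) (r : List (DV n)) (hc : r.Chain' (DE n))
    (hl : r.getLast? = some (DV.v (Fin.last n)))
    (i : Fin n) (bb : Bool) (hh : r.head? = some (DV.u i bb)) :
    ∃ (j' : Fin (n+1)) (r'' : List (DV n)),
      r = DV.u i bb :: DV.v j' :: r'' ∧ (j' : ℕ) = (i : ℕ) + 1 := by
  cases r with
  | nil => simp at hh
  | cons a rest =>
      simp only [List.head?_cons, Option.some.injEq] at hh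
      subst hh
      cases rest with
      | nil => simp at hl
      | cons y r'' =>
          have hde : DE n (DV.u i bb) y := (List.isChain_cons_cons.mp hc).1
          cases y with
          | v j' => exact ⟨j', r'', rfl, hde⟩
          | u i' bb' => exact absurd hde (by simp [DE])

/-- one-step decomposition of a path starting at a `v`-vertex, not yet at the end -/
lemma decomp_v (n : ℕ) (r : List (DV n)) (hc : r.Chain' (DE n))
    (hl : r.getLast? = some (DV.v (Fin.last n)))
    (j : Fin (n+1)) (hh : r.head? = some (DV.v j)) (hj : (j : ℕ) < n) :
    ∃ (bb : Bool) (rest : List (DV n)),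
      r = DV.v j :: DV.u ⟨(j : ℕ), hj⟩ bb :: rest := by
  cases r with
  | nil => simp at hh
  | cons a rest =>
      simp only [List.head?_cons, Option.some.injEq] at hh
      subst hh
      cases rest with
      | nil =>
          simp only [List.getLast?_singleton, Option.some.injEq] at hl
          have : (j : ℕ) = n := by
            have := congrArg (fun x : DV n => idx x) hl
            simpa [idx, Fin.last] using this
          omega
      | cons x rest' =>
          have hde : DE n (DV.v j) x := (List.isChain_cons_cons.mp hc).1
          cases x with
          | v j' => exact absurd hde (by simp [DE])
          | u i bb =>
              have : i = ⟨(j : ℕ), hj⟩ := by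
                ext; exact hde.symm
              subst this
              exact ⟨bb, rest', rfl⟩

lemma cast_pos {n : ℕ} (sv : Fin n → ℤ) (hs : ∀ i, 0 < sv i) (i : Fin n) :
    (0 : ℝ) < (sv i : ℝ) := by exact_mod_cast hs i

/-- the weight of a diamond is at least `gc` -/
lemma edge_ge_gc (n : ℕ) (sv : Fin n → ℤ) (hs : ∀ i, 0 < sv i) (W : ℤ)
    (β : ℝ) (hβ0 : 0 < β) (hβ1 : β < 1)
    (j j' : Fin (n+1)) (i : Fin n) (bb : Bool) :
    gc n sv W β (i : ℕ) ≤ Dw n sv W β (DV.v j) (DV.u i bb) + Dw n sv W β (DV.u i bb) (DV.v j') := by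
  have hi : (i : ℕ) < n := i.isLt
  have hfin : (⟨(i : ℕ), hi⟩ : Fin n) = i := by ext; rfl
  have hspos := cast_pos sv hs i
  have key : (sv i : ℝ) ≤ (sv i : ℝ) / β := by
    rw [le_div_iff₀ hβ0]; nlinarith
  cases bb <;> simp [Dw, gc, hi, hfin, sub_div, add_div] <;> linarith [key]

/-- lower bound on the true cost of any `v j → t` path -/
lemma costLB (n : ℕ) (sv : Fin n → ℤ) (hs : ∀ i, 0 < sv i) (W : ℤ)
    (β : ℝ) (hβ0 : 0 < β) (hβ1 : β < 1) :
    ∀ (m : ℕ) (p : List (DV n)), p.length ≤ m → p.Chain' (DE n) →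
      p.getLast? = some (DV.v (Fin.last n)) →
      ∀ j : Fin (n+1), p.head? = some (DV.v j) →
      Cc n sv W β (j : ℕ) ≤ pathCost (Dw n sv W β) p := by
  intro m
  induction m with
  | zero =>
      intro p hm hc hl j hh
      cases p <;> simp_all
  | succ m ih =>
      intro p hm hc hl j hh
      by_cases hj : (j : ℕ) < n
      · obtain ⟨bb, rest, rfl⟩ := decomp_v n p hc hl j hh hj
        obtain ⟨j', r'', hr, hj'⟩ := decomp_u n (DV.u ⟨(j:ℕ), hj⟩ bb :: rest)
          hc.tail (by rw [List.getLast?_cons_cons] at hl; exact hl) _ bb rfl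
        rw [List.cons.injEq] at hr
        obtain ⟨-, rfl⟩ := hr
        have hlen : (DV.v j' :: r'').length ≤ m := by
          simp at hm ⊢; omega
        have htail : (DV.v j' :: r'').Chain' (DE n) := hc.tail.tail
        have hltail : (DV.v j' :: r'').getLast? = some (DV.v (Fin.last n)) := by
          rw [List.getLast?_cons_cons, List.getLast?_cons_cons] at hl; exact hl
        have hrec := ih _ hlen htail hltail j' rfl
        rw [pathCost_cons₂, pathCost_cons₂]
        have hedge := edge_ge_gc n sv hs W β hβ0 hβ1 j j' ⟨(j:ℕ), hj⟩ bb
        rw [Cc_succ n sv W β (j:ℕ) hj]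
        have : Cc n sv W β ((j:ℕ)+1) = Cc n sv W β (j':ℕ) := by rw [hj']
        rw [this]
        simp only [Fin.val_mk] at hedge ⊢
        linarith
      · -- j = n : then p = [v j] (since any further edge would need j < n)
        cases p with
        | nil => simp at hh
        | cons a rest =>
            simp only [List.head?_cons, Option.some.injEq] at hh
            subst hh
            cases rest with
            | nil => rw [pathCost_single, Cc_n n sv W β _ (by omega)]
            | cons x rest' =>
                have hde : DE n (DV.v j) x := (List.isChain_cons_cons.mp hc).1
                cases x with
                | v j' => exact absurd hde (by simp [DE])
                | u i bb =>
                    have : (j : ℕ) = (i : ℕ) := hde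
                    have := i.isLt
                    omega

lemma Dw_u (n : ℕ) (sv : Fin n → ℤ) (W : ℤ) (β : ℝ) (i : Fin n) (bb : Bool)
    (x y : Fin (n+1)) :
    Dw n sv W β (DV.u i bb) (DV.v x) = Dw n sv W β (DV.u i bb) (DV.v y) := by
  cases bb <;> rfl

lemma perceivedLB_v (n : ℕ) (sv : Fin n → ℤ) (hs : ∀ i, 0 < sv i) (W : ℤ)
    (β : ℝ) (hβ0 : 0 < β) (hβ1 : β < 1)
    (r : List (DV n)) (hc : r.Chain' (DE n))
    (hl : r.getLast? = some (DV.v (Fin.last n)))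
    (j : Fin (n+1)) (hh : r.head? = some (DV.v j)) (hj : (j : ℕ) < n) :
    (W : ℝ) + β * Cc n sv W β ((j : ℕ) + 1) ≤ perceived (Dw n sv W β) β r := by
  obtain ⟨bb, rest, rfl⟩ := decomp_v n r hc hl j hh hj
  obtain ⟨j', r'', hr, hj'⟩ := decomp_u n (DV.u ⟨(j:ℕ), hj⟩ bb :: rest)
    hc.tail (by rw [List.getLast?_cons_cons] at hl; exact hl) _ bb rfl
  rw [List.cons.injEq] at hr
  obtain ⟨-, rfl⟩ := hr
  have hrec := costLB n sv hs W β hβ0 hβ1 (DV.v j' :: r'').length _ le_rfl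
    hc.tail.tail
    (by rw [List.getLast?_cons_cons, List.getLast?_cons_cons] at hl; exact hl) j' rfl
  rw [perceived_cons₂, pathCost_cons₂]
  have hw : Dw n sv W β (DV.v j) (DV.u ⟨(j:ℕ), hj⟩ bb)
      + β * Dw n sv W β (DV.u ⟨(j:ℕ), hj⟩ bb) (DV.v j') = (W : ℝ) := by
    cases bb <;> simp [Dw] <;> field_simp <;> ring
  have h2 : β * Cc n sv W β ((j:ℕ)+1) ≤ β * pathCost (Dw n sv W β) (DV.v j' :: r'') := by
    apply mul_le_mul_of_nonneg_left _ (le_of_lt hβ0)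
    rw [show ((j:ℕ)+1) = (j' : ℕ) by simp [hj']]
    exact hrec
  nlinarith [h2, hw]

lemma perceivedLB_u (n : ℕ) (sv : Fin n → ℤ) (hs : ∀ i, 0 < sv i) (W : ℤ)
    (β : ℝ) (hβ0 : 0 < β) (hβ1 : β < 1)
    (r : List (DV n)) (hc : r.Chain' (DE n))
    (hl : r.getLast? = some (DV.v (Fin.last n)))
    (i : Fin n) (bb : Bool) (hh : r.head? = some (DV.u i bb)) :
    Dw n sv W β (DV.u i bb) (DV.v 0) + β * Cc n sv W β ((i : ℕ) + 1)
      ≤ perceived (Dw n sv W β) β r := by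
  obtain ⟨j', r'', rfl, hj'⟩ := decomp_u n r hc hl i bb hh
  have hrec := costLB n sv hs W β hβ0 hβ1 (DV.v j' :: r'').length _ le_rfl
    hc.tail (by rw [List.getLast?_cons_cons] at hl; exact hl) j' rfl
  rw [perceived_cons₂, Dw_u n sv W β i bb 0 j']
  have h2 : β * Cc n sv W β ((i:ℕ)+1) ≤ β * pathCost (Dw n sv W β) (DV.v j' :: r'') := by
    apply mul_le_mul_of_nonneg_left _ (le_of_lt hβ0)
    rw [show ((i:ℕ)+1) = (j' : ℕ) from hj'.symm]
    exact hrec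
  linarith

end Stmt3Aux
/-- In the diamond-chain graph built from positive integers
`s₁,…,s_n`, an integer `W > max_i s_i` and `0 < β < 1`, every edge is a
feasible transition; consequently every directed `s`–`t` path is feasible. -/
theorem stmt3 (n : ℕ) (sv : Fin n → ℤ) (hs : ∀ i, 0 < sv i)
    (W : ℤ) (hW : ∀ i, sv i < W) (β : ℝ) (hβ0 : 0 < β) (hβ1 : β < 1) :
    (∀ a b, DE n a b → FeasibleStep (DE n) (Dw n sv W β) β (DV.v (Fin.last n)) a b) ∧
    (∀ p, IsPathOn (DE n) (DV.v 0) (DV.v (Fin.last n)) p →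
        FeasPath (DE n) (Dw n sv W β) β (DV.v 0) (DV.v (Fin.last n)) p) := by
  open Stmt3Aux in
  have h1 : ∀ a b, DE n a b → FeasibleStep (DE n) (Dw n sv W β) β (DV.v (Fin.last n)) a b := by
    intro a b hab
    cases a with
    | v j =>
        cases b with
        | v j' => exact hab.elim
        | u i bb =>
            have hde : (j : ℕ) = (i : ℕ) := hab
            have hi : (i : ℕ) < n := i.isLt
            have hj : (j : ℕ) < n := by omega
            set k := n - ((i:ℕ)+1) with hk
            have hkk : (i:ℕ) + 1 + k = n := by omega
            set q := up n k ((i:ℕ)+1) hkk with hq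
            have hcons : q = DV.v ⟨(i:ℕ)+1, by omega⟩ :: q.tail :=
              up_eq_cons n k ((i:ℕ)+1) hkk (by omega)
            refine ⟨hab, q, ⟨rfl, ?_, ?_, ?_⟩, ?_⟩
            · rw [List.getLast?_cons_cons]
              rw [hcons, List.getLast?_cons_cons, ← hcons]
              exact up_getLast n k ((i:ℕ)+1) hkk
            · refine List.isChain_cons_cons.mpr ⟨hab, ?_⟩
              rw [hcons]
              refine List.isChain_cons_cons.mpr ⟨by simp [DE], ?_⟩
              rw [← hcons]
              exact up_chain n k ((i:ℕ)+1) hkk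
            · refine List.nodup_cons.mpr ⟨?_, List.nodup_cons.mpr ⟨?_, up_nodup n k ((i:ℕ)+1) hkk⟩⟩
              · simp only [List.mem_cons]
                push_neg
                refine ⟨by simp, fun hx => ?_⟩
                have := up_mem_idx n k ((i:ℕ)+1) hkk _ hx
                simp [idx] at this
                omega
              · intro hx
                have := up_mem_idx n k ((i:ℕ)+1) hkk _ hx
                simp [idx] at this
            · intro r hr
              obtain ⟨hrh, hrl, hrc, -⟩ := hr
              have hLB := perceivedLB_v n sv hs W β hβ0 hβ1 r hrc hrl j hrh hj
              have hval : perceived (Dw n sv W β) β (DV.v j :: DV.u i bb :: q)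
                  = (W : ℝ) + β * Cc n sv W β ((i:ℕ)+1) := by
                rw [perceived_cons₂, hcons, pathCost_cons₂, ← hcons,
                  up_cost n sv W β k ((i:ℕ)+1) hkk]
                cases bb <;> simp [Dw] <;> field_simp <;> ring
              rw [hval]
              rwa [show (j:ℕ) + 1 = (i:ℕ) + 1 by omega] at hLB
    | u i bb =>
        cases b with
        | u i' bb' => exact hab.elim
        | v j' =>
            have hde : (j' : ℕ) = (i : ℕ) + 1 := hab
            have hi : (i : ℕ) < n := i.isLt
            obtain rfl : j' = ⟨(i:ℕ)+1, Nat.succ_lt_succ hi⟩ := Fin.ext hde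
            set k := n - ((i:ℕ)+1) with hk
            have hkk : (i:ℕ) + 1 + k = n := by omega
            set q := (up n k ((i:ℕ)+1) hkk).tail with hq
            have hbq : DV.v ⟨(i:ℕ)+1, by omega⟩ :: q = up n k ((i:ℕ)+1) hkk :=
              (up_eq_cons n k ((i:ℕ)+1) hkk (by omega)).symm
            refine ⟨hab, q, ⟨rfl, ?_, ?_, ?_⟩, ?_⟩
            · rw [List.getLast?_cons_cons, hbq]
              exact up_getLast n k ((i:ℕ)+1) hkk
            · refine List.isChain_cons_cons.mpr ⟨hab, ?_⟩
              rw [hbq]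
              exact up_chain n k ((i:ℕ)+1) hkk
            · refine List.nodup_cons.mpr ⟨?_, ?_⟩
              · rw [hbq]
                intro hx
                have := up_mem_idx n k ((i:ℕ)+1) hkk _ hx
                simp [idx] at this
              · rw [hbq]
                exact up_nodup n k ((i:ℕ)+1) hkk
            · intro r hr
              obtain ⟨hrh, hrl, hrc, -⟩ := hr
              have hLB := perceivedLB_u n sv hs W β hβ0 hβ1 r hrc hrl i bb hrh
              have hval : perceived (Dw n sv W β) β
                  (DV.u i bb :: DV.v ⟨(i:ℕ)+1, by omega⟩ :: q)
                  = Dw n sv W β (DV.u i bb) (DV.v 0) + β * Cc n sv W β ((i:ℕ)+1) := by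
                rw [perceived_cons₂, hbq, up_cost n sv W β k ((i:ℕ)+1) hkk,
                  Dw_u n sv W β i bb ⟨(i:ℕ)+1, by omega⟩ 0]
              rw [hval]
              exact hLB
  refine ⟨h1, fun p hp => ⟨hp, ?_⟩⟩
  exact List.IsChain.imp (fun a b hab => h1 a b hab) hp.2.2.1
end

section
/- Let G be a finite directed acyclic graph with vertices s and t, and let F be a set of k directed edges of G such that after deleting the edges of F the underlying undirected graph of G contains no cycle (is a forest). Then the number of directed s–t paths in G is at most 2^k. -/
/-!
Common definitions for time-inconsistent planning models (Kleinberg–Oren).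
A task graph is given by a finite vertex type `V`, an edge relation
`E : V → V → Prop` and edge weights `w : V → V → ℝ`.  A directed path is
represented by the list of its vertices (nonempty, consecutive vertices joined
by edges, no repeated vertices).
-/

variable {V : Type*}

namespace Stmt5Aux

/-- The list of edges of a path (list of vertices). -/
def edgs (p : List V) : List (V × V) := p.zip p.tail

@[simp] lemma edgs_nil : edgs ([] : List V) = [] := rfl
@[simp] lemma edgs_single (a : V) : edgs [a] = [] := rfl
@[simp] lemma edgs_cons_cons (a b : V) (l : List V) :
    edgs (a :: b :: l) = (a, b) :: edgs (b :: l) := rfl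

lemma edgs_append_cons : ∀ (u : List V) (x : V) (v : List V),
    edgs (u ++ x :: v) = edgs (u ++ [x]) ++ edgs (x :: v)
  | [], x, v => by simp
  | [a], x, v => by simp
  | a :: b :: u, x, v => by
      have := edgs_append_cons (b :: u) x v
      simp only [List.cons_append, edgs_cons_cons] at this ⊢
      rw [this]

lemma chain'_iff_edgs {R : V → V → Prop} : ∀ (p : List V),
    p.Chain' R ↔ ∀ e ∈ edgs p, R e.1 e.2
  | [] => by simp [List.Chain']
  | [a] => by simp [List.Chain']
  | a :: b :: l => by
      rw [show List.Chain' R (a :: b :: l) ↔ R a b ∧ List.Chain' R (b :: l) from List.isChain_cons_cons, chain'_iff_edgs (b :: l)]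
      simp

lemma exists_split_of_mem_edgs : ∀ {p : List V} {x y : V}, (x, y) ∈ edgs p →
    ∃ u v, p = u ++ x :: y :: v
  | [], x, y, h => by simp at h
  | [a], x, y, h => by simp at h
  | a :: b :: l, x, y, h => by
      rw [edgs_cons_cons, List.mem_cons] at h
      rcases h with h | h
      · obtain ⟨rfl, rfl⟩ : x = a ∧ y = b := by
          simpa [Prod.ext_iff] using h
        exact ⟨[], l, rfl⟩
      · obtain ⟨u, v, huv⟩ := exists_split_of_mem_edgs h
        exact ⟨a :: u, v, by simp [huv]⟩

lemma mem_of_mem_edgs {p : List V} {x y : V} (h : (x, y) ∈ edgs p) : x ∈ p ∧ y ∈ p := by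
  obtain ⟨u, v, rfl⟩ := exists_split_of_mem_edgs h
  constructor <;> simp

lemma reach_of_mem {E : V → V → Prop} : ∀ {p : List V} {a x : V},
    p.Chain' E → p.head? = some a → x ∈ p → Relation.ReflTransGen E a x
  | [], _, _, _, hh, _ => by simp at hh
  | b :: l, a, x, hc, hh, hm => by
      have hb : b = a := by simpa using hh
      subst hb
      rcases List.mem_cons.mp hm with rfl | hx
      · exact .refl
      · rcases l with _ | ⟨c, l'⟩
        · simp at hx
        · have hbc : E b c := (List.isChain_cons_cons.mp hc).1
          exact Relation.ReflTransGen.head hbc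
            (reach_of_mem (List.isChain_cons_cons.mp hc).2 rfl hx)

lemma first_edge (P : V × V → Prop) : ∀ (p : List V),
    (∀ e ∈ edgs p, ¬ P e) ∨
    ∃ u x y v, p = u ++ x :: y :: v ∧ P (x, y) ∧ ∀ e ∈ edgs (u ++ [x]), ¬ P e
  | [] => .inl (by simp)
  | [a] => .inl (by simp)
  | a :: b :: l => by
      by_cases hab : P (a, b)
      · exact .inr ⟨[], a, b, l, rfl, hab, by simp⟩
      · rcases first_edge P (b :: l) with h | ⟨u, x, y, v, hsplit, hP, hfree⟩
        · left
          intro e he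
          rw [edgs_cons_cons, List.mem_cons] at he
          rcases he with rfl | he
          · exact hab
          · exact h e he
        · refine .inr ⟨a :: u, x, y, v, by rw [List.cons_append, ← hsplit], hP, ?_⟩
          intro e he
          rcases u with _ | ⟨c, u'⟩
          · have hbx : b = x := by simpa using congrArg List.head? hsplit
            have he' : e = (a, x) := by simpa using he
            subst he'; subst hbx
            exact hab
          · have hbc : b = c := by simpa using congrArg List.head? hsplit
            subst hbc
            simp only [List.cons_append, edgs_cons_cons, List.mem_cons] at he
            rcases he with rfl | he
            · exact hab
            · exact hfree e (by simpa using he)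

open SimpleGraph in
/-- Turn a chain of adjacencies into a walk. -/
def toWalk (G : SimpleGraph V) : ∀ (a : V) (l : List V), List.Chain G.Adj a l →
    G.Walk a ((a :: l).getLast (List.cons_ne_nil a l))
  | _, [], _ => Walk.nil
  | a, b :: l, h =>
      Walk.cons (List.chain_cons.mp h).1
        ((toWalk G b l (List.chain_cons.mp h).2).copy rfl
          (List.getLast_cons (List.cons_ne_nil b l)).symm)

lemma toWalk_support (G : SimpleGraph V) : ∀ (a : V) (l : List V) (h : List.Chain G.Adj a l),
    (toWalk G a l h).support = a :: l
  | _, [], _ => rfl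
  | a, b :: l, h => by
      simp [toWalk, toWalk_support G b l (List.chain_cons.mp h).2]

open SimpleGraph in
lemma eq_of_forest_paths {G : SimpleGraph V} (hG : G.IsAcyclic) {p q : List V} {a b : V}
    (hpc : p.Chain' G.Adj) (hqc : q.Chain' G.Adj)
    (hph : p.head? = some a) (hqh : q.head? = some a)
    (hpl : p.getLast? = some b) (hql : q.getLast? = some b)
    (hpn : p.Nodup) (hqn : q.Nodup) : p = q := by
  rcases p with _ | ⟨a₁, p'⟩; · simp at hph
  rcases q with _ | ⟨a₂, q'⟩; · simp at hqh
  obtain rfl : a₁ = a₂ := by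
    have h1 : a₁ = a := by simpa using hph
    have h2 : a₂ = a := by simpa using hqh
    rw [h1, h2]
  have hcp : List.Chain G.Adj a₁ p' := hpc
  have hcq : List.Chain G.Adj a₁ q' := hqc
  have hbp : (a₁ :: p').getLast (List.cons_ne_nil a₁ p') = b := by
    have h := List.getLast?_eq_getLast (l := a₁ :: p') (List.cons_ne_nil a₁ p')
    rw [hpl] at h
    exact (Option.some_injective _ h).symm
  have hbq : (a₁ :: q').getLast (List.cons_ne_nil a₁ q') = b := by
    have h := List.getLast?_eq_getLast (l := a₁ :: q') (List.cons_ne_nil a₁ q')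
    rw [hql] at h
    exact (Option.some_injective _ h).symm
  let wp : G.Walk a₁ b := (toWalk G a₁ p' hcp).copy rfl hbp
  let wq : G.Walk a₁ b := (toWalk G a₁ q' hcq).copy rfl hbq
  have hwp : wp.support = a₁ :: p' := by
    simp [wp, Walk.support_copy, toWalk_support]
  have hwq : wq.support = a₁ :: q' := by
    simp [wq, Walk.support_copy, toWalk_support]
  have hp_path : wp.IsPath := (Walk.isPath_def _).mpr (by rw [hwp]; exact hpn)
  have hq_path : wq.IsPath := (Walk.isPath_def _).mpr (by rw [hwq]; exact hqn)
  have heq : (⟨wp, hp_path⟩ : G.Path a₁ b) = ⟨wq, hq_path⟩ :=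
    isAcyclic_iff_path_unique.mp hG _ _
  have heq' : wp = wq := congrArg Subtype.val heq
  rw [← hwp, ← hwq, heq']

/-- Uniqueness of `F`-free directed paths when the undirected graph off `F` is a forest. -/
lemma forest_unique {E : V → V → Prop} {F : Finset (V × V)}
    (hforest : (SimpleGraph.fromRel fun a b => E a b ∧ (a, b) ∉ F).IsAcyclic)
    {p q : List V} {a b : V}
    (hp : IsPathOn E a b p) (hq : IsPathOn E a b q)
    (hpF : ∀ e ∈ edgs p, e ∉ F) (hqF : ∀ e ∈ edgs q, e ∉ F) : p = q := by
  set G := SimpleGraph.fromRel fun a b => E a b ∧ (a, b) ∉ F with hG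
  have adj : ∀ (r : List V), r.Chain' E → r.Nodup → (∀ e ∈ edgs r, e ∉ F) →
      r.Chain' G.Adj := by
    intro r hc hn hF'
    rw [chain'_iff_edgs] at hc ⊢
    intro e he
    have hE : E e.1 e.2 := hc e he
    have hFe : (e.1, e.2) ∉ F := by have := hF' e he; simpa using this
    have hne : e.1 ≠ e.2 := by
      obtain ⟨u, v, hr⟩ := exists_split_of_mem_edgs (p := r) (x := e.1) (y := e.2) (by simpa using he)
      intro hxy
      rw [hr] at hn
      have : ¬ (e.1 :: e.2 :: v).Nodup := by
        simp [hxy]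
      exact this (((List.suffix_append u (e.1 :: e.2 :: v)).sublist).nodup hn)
    exact SimpleGraph.fromRel_adj .. |>.mpr ⟨hne, Or.inl ⟨hE, hFe⟩⟩
  exact eq_of_forest_paths hforest
    (adj p hp.2.2.1 hp.2.2.2 hpF) (adj q hq.2.2.1 hq.2.2.2 hqF)
    hp.1 hq.1 hp.2.1 hq.2.1 hp.2.2.2 hq.2.2.2

lemma head?_append_cons (u : List V) (x : V) (v : List V) :
    (u ++ x :: v).head? = (u ++ [x]).head? := by
  cases u <;> simp

/-- Key lemma: two directed paths with the same endpoints using the same set of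
`F`-edges are equal. -/
lemma key {E : V → V → Prop} {F : Finset (V × V)}
    (hacyc : NoDirCycle E)
    (hforest : (SimpleGraph.fromRel fun a b => E a b ∧ (a, b) ∉ F).IsAcyclic) :
    ∀ (n : ℕ) (p q : List V) (a t : V), p.length ≤ n →
      IsPathOn E a t p → IsPathOn E a t q →
      (∀ e ∈ F, (e ∈ edgs p ↔ e ∈ edgs q)) → p = q := by
  intro n
  induction n with
  | zero =>
    intro p q a t hlen hp _ _
    rw [List.length_eq_zero_iff.mp (Nat.le_zero.mp hlen)] at hp
    simp [IsPathOn] at hp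
  | succ n ih =>
    intro p q a t hlen hp hq hFe
    rcases first_edge (fun e => e ∈ F) p with hpfree | ⟨u, x, y, v, hsplit, hxyF, hufree⟩
    · have hqfree : ∀ e ∈ edgs q, e ∉ F := fun e he hef => hpfree e ((hFe e hef).mpr he) hef
      exact forest_unique hforest hp hq hpfree hqfree
    · have hxy_in_p : (x, y) ∈ edgs p := by
        rw [hsplit, edgs_append_cons, edgs_cons_cons]; simp
      have hxy_in_q : (x, y) ∈ edgs q := (hFe _ hxyF).mp hxy_in_p
      rcases first_edge (fun e => e ∈ F) q with hqfree | ⟨u', x', y', v', hsplit', hxyF', hufree'⟩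
      · exact absurd hxyF (hqfree _ hxy_in_q)
      · have hx'y'_in_q : (x', y') ∈ edgs q := by
          rw [hsplit', edgs_append_cons, edgs_cons_cons]; simp
        have hx'y'_in_p : (x', y') ∈ edgs p := (hFe _ hxyF').mpr hx'y'_in_q
        -- chains of suffixes
        have hchain_yv : (y :: v).Chain' E := by
          rw [chain'_iff_edgs]
          intro e he
          have := (chain'_iff_edgs p).mp hp.2.2.1 e
          exact this (by rw [hsplit, edgs_append_cons, edgs_cons_cons]; simp [he])
        have hchain_yv' : (y' :: v').Chain' E := by
          rw [chain'_iff_edgs]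
          intro e he
          have := (chain'_iff_edgs q).mp hq.2.2.1 e
          exact this (by rw [hsplit', edgs_append_cons, edgs_cons_cons]; simp [he])
        have hExy : E x y := (chain'_iff_edgs p).mp hp.2.2.1 (x, y) hxy_in_p
        have hEx'y' : E x' y' := (chain'_iff_edgs q).mp hq.2.2.1 (x', y') hx'y'_in_q
        -- the two first F-edges coincide
        have claim : x = x' ∧ y = y' := by
          by_contra hne
          have hne' : (x, y) ≠ (x', y') := by
            simp only [ne_eq, Prod.mk.injEq]; exact hne
          have h1 : (x', y') ∈ edgs (y :: v) := by
            rw [hsplit, edgs_append_cons, edgs_cons_cons] at hx'y'_in_p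
            rcases List.mem_append.mp hx'y'_in_p with h | h
            · exact absurd hxyF' (hufree _ h)
            · rcases List.mem_cons.mp h with h | h
              · exact absurd h.symm hne'
              · exact h
          have h2 : (x, y) ∈ edgs (y' :: v') := by
            rw [hsplit', edgs_append_cons, edgs_cons_cons] at hxy_in_q
            rcases List.mem_append.mp hxy_in_q with h | h
            · exact absurd hxyF (hufree' _ h)
            · rcases List.mem_cons.mp h with h | h
              · exact absurd h hne'
              · exact h
          have r1 : Relation.ReflTransGen E y x' :=
            reach_of_mem hchain_yv rfl (mem_of_mem_edgs h1).1
          have r2 : Relation.ReflTransGen E y' x :=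
            reach_of_mem hchain_yv' rfl (mem_of_mem_edgs h2).1
          exact hacyc x (Relation.TransGen.head' hExy
            (r1.trans (Relation.ReflTransGen.head hEx'y' r2)))
        obtain ⟨hxx', hyy'⟩ := claim
        subst hxx'; subst hyy'
        -- the prefixes are F-free paths from a to x, hence equal
        have hp_pre : IsPathOn E a x (u ++ [x]) := by
          refine ⟨?_, List.getLast?_concat, ?_, ?_⟩
          · rw [← hp.1, hsplit]
            exact (head?_append_cons u x (y :: v)).symm
          · rw [chain'_iff_edgs]
            intro e he
            exact (chain'_iff_edgs p).mp hp.2.2.1 e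
              (by rw [hsplit, edgs_append_cons]; simp [he])
          · refine List.Sublist.nodup ?_ (hsplit ▸ hp.2.2.2)
            exact (List.append_sublist_append_left u).mpr (by simp)
        have hq_pre : IsPathOn E a x (u' ++ [x]) := by
          refine ⟨?_, List.getLast?_concat, ?_, ?_⟩
          · rw [← hq.1, hsplit']
            exact (head?_append_cons u' x (y :: v')).symm
          · rw [chain'_iff_edgs]
            intro e he
            exact (chain'_iff_edgs q).mp hq.2.2.1 e
              (by rw [hsplit', edgs_append_cons]; simp [he])
          · refine List.Sublist.nodup ?_ (hsplit' ▸ hq.2.2.2)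
            exact (List.append_sublist_append_left u').mpr (by simp)
        have hpre_eq : u ++ [x] = u' ++ [x] :=
          forest_unique hforest hp_pre hq_pre hufree hufree'
        have huu' : u = u' := List.append_cancel_right hpre_eq
        subst huu'
        -- suffixes are paths from y to t using the remaining F-edges
        have hsplit2 : p = (u ++ [x]) ++ y :: v := by rw [hsplit]; simp
        have hsplit2' : q = (u ++ [x]) ++ y :: v' := by rw [hsplit']; simp
        have hxv : x ∉ y :: v := by
          have := hsplit2 ▸ hp.2.2.2
          exact List.disjoint_of_nodup_append this (by simp)
        have hxv' : x ∉ y :: v' := by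
          have := hsplit2' ▸ hq.2.2.2
          exact List.disjoint_of_nodup_append this (by simp)
        have hp_suf : IsPathOn E y t (y :: v) := by
          refine ⟨rfl, ?_, hchain_yv, ?_⟩
          · rw [← hp.2.1, hsplit2, List.getLast?_append_cons]
          · exact ((List.suffix_append (u ++ [x]) (y :: v)).sublist).nodup (hsplit2 ▸ hp.2.2.2)
        have hq_suf : IsPathOn E y t (y :: v') := by
          refine ⟨rfl, ?_, hchain_yv', ?_⟩
          · rw [← hq.2.1, hsplit2', List.getLast?_append_cons]
          · exact ((List.suffix_append (u ++ [x]) (y :: v')).sublist).nodup (hsplit2' ▸ hq.2.2.2)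
        have hFe' : ∀ e ∈ F, (e ∈ edgs (y :: v) ↔ e ∈ edgs (y :: v')) := by
          intro e heF
          have hstep : ∀ (P Q w w' : List V), P = u ++ x :: y :: w → Q = u ++ x :: y :: w' →
              (∀ e' ∈ F, e' ∈ edgs P → e' ∈ edgs Q) →
              x ∉ y :: w → e ∈ edgs (y :: w) → e ∈ edgs (y :: w') := by
            intro P Q w w' hP hQ hPQ hxw hew
            have hep : e ∈ edgs P := by
              rw [hP, edgs_append_cons, edgs_cons_cons]
              simp [hew]
            have heq' := hPQ e heF hep
            rw [hQ, edgs_append_cons, edgs_cons_cons] at heq'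
            rcases List.mem_append.mp heq' with h | h
            · exact absurd heF (hufree _ h)
            · rcases List.mem_cons.mp h with rfl | h
              · exact absurd (mem_of_mem_edgs hew).1 hxw
              · exact h
          constructor
          · exact hstep p q v v' hsplit hsplit' (fun e' he' => (hFe e' he').mp) hxv
          · exact hstep q p v' v hsplit' hsplit (fun e' he' => (hFe e' he').mpr) hxv'
        have hlen' : (y :: v).length ≤ n := by
          have h := congrArg List.length hsplit2
          simp only [List.length_append, List.length_cons, List.length_singleton,
            List.length_nil] at h
          simp only [List.length_cons]
          omega
        have := ih (y :: v) (y :: v') y t hlen' hp_suf hq_suf hFe'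
        rw [hsplit2, hsplit2', this]

end Stmt5Aux

/-- If `G` is a finite DAG and `F` is a set of `k` directed
edges of `G` whose removal makes the underlying undirected graph of `G` a
forest (acyclic), then `G` has at most `2^k` directed `s`–`t` paths. -/
theorem stmt5 {V : Type*} [Fintype V] (E : V → V → Prop)
    (hacyc : NoDirCycle E) (s t : V)
    (k : ℕ) (F : Finset (V × V)) (hF : ∀ e ∈ F, E e.1 e.2) (hFcard : F.card = k)
    (hforest : (SimpleGraph.fromRel fun a b => E a b ∧ (a, b) ∉ F).IsAcyclic) :
    {p : List V | IsPathOn E s t p}.Finite ∧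
    {p : List V | IsPathOn E s t p}.ncard ≤ 2 ^ k := by
  classical
  set S := {p : List V | IsPathOn E s t p} with hS
  set f : List V → Finset (V × V) := fun p => F.filter (fun e => e ∈ Stmt5Aux.edgs p) with hf
  have hinj : S.InjOn f := by
    intro p hp q hq hfpq
    refine Stmt5Aux.key hacyc hforest p.length p q s t le_rfl hp hq ?_
    intro e he
    constructor
    · intro h
      have h1 : e ∈ f p := Finset.mem_filter.mpr ⟨he, h⟩
      rw [hfpq] at h1
      exact (Finset.mem_filter.mp h1).2
    · intro h
      have h1 : e ∈ f q := Finset.mem_filter.mpr ⟨he, h⟩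
      rw [← hfpq] at h1
      exact (Finset.mem_filter.mp h1).2
  have himage : f '' S ⊆ ↑F.powerset := by
    rintro A ⟨p, _, rfl⟩
    simp only [Finset.coe_powerset, Set.mem_preimage, Set.mem_powerset_iff, Finset.coe_subset]
    exact Finset.filter_subset _ _
  have hfin : S.Finite :=
    Set.Finite.of_finite_image (Set.Finite.subset F.powerset.finite_toSet himage) hinj
  refine ⟨hfin, ?_⟩
  calc S.ncard = (f '' S).ncard := (Set.ncard_image_of_injOn hinj).symm
    _ ≤ (↑F.powerset : Set (Finset (V × V))).ncard :=
        Set.ncard_le_ncard himage F.powerset.finite_toSet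
    _ = F.powerset.card := Set.ncard_coe_finset _
    _ = 2 ^ k := by rw [Finset.card_powerset, hFcard]
end

section
/- Let G be a finite directed acyclic graph on n vertices with vertices s and t, and let S be a set of k vertices of G such that the underlying undirected graph of G − S (the graph obtained by deleting the vertices of S) is a forest. Then the number of directed s–t paths in G is at most k^k · n^{2k}. -/
/-!
Common definitions for time-inconsistent planning models (Kleinberg–Oren).
A task graph is given by a finite vertex type `V`, an edge relation
`E : V → V → Prop` and edge weights `w : V → V → ℝ`.  A directed path is
represented by the list of its vertices (nonempty, consecutive vertices joined
by edges, no repeated vertices).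
-/

variable {V : Type*}

section Aux
variable {V : Type*}


lemma exists_walk (G : SimpleGraph V) : ∀ (l : List V) (a b : V), l.Chain' G.Adj →
    l.head? = some a → l.getLast? = some b → ∃ w : G.Walk a b, w.support = l := by
  intro l
  induction l with
  | nil => intro a b _ h; simp at h
  | cons x r ih =>
    intro a b hc hh hl
    simp at hh; subst hh
    match r, hc, hl with
    | [], _, hl =>
      simp at hl; subst hl
      exact ⟨SimpleGraph.Walk.nil, rfl⟩
    | y :: r', hc, hl =>
      simp only [List.Chain'] at hc; rw [List.isChain_cons_cons] at hc
      have hl' : (y :: r').getLast? = some b := by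
        rw [List.getLast?_cons_cons] at hl; exact hl
      obtain ⟨w, hw⟩ := ih y b hc.2 rfl hl'
      exact ⟨SimpleGraph.Walk.cons hc.1 w, by simp [hw]⟩

lemma forest_seg {E : V → V → Prop} {S : Finset V}
    (hforest : (SimpleGraph.fromRel fun a b => E a b ∧ a ∉ S ∧ b ∉ S).IsAcyclic)
    (p q : List V) (hpc : p.Chain' E) (hqc : q.Chain' E) (hpn : p.Nodup) (hqn : q.Nodup)
    (hpS : ∀ x ∈ p, x ∉ S) (hqS : ∀ x ∈ q, x ∉ S)
    (hh : p.head? = q.head?) (hl : p.getLast? = q.getLast?) : p = q := by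
  set G := SimpleGraph.fromRel fun a b => E a b ∧ a ∉ S ∧ b ∉ S with hG
  have chainG : ∀ (l : List V), l.Chain' E → l.Nodup → (∀ x ∈ l, x ∉ S) → l.Chain' G.Adj := by
    intro l hc hn hS
    simp only [List.Chain'] at hc ⊢; rw [List.isChain_iff_getElem] at hc ⊢
    intro i hi
    have hne : l.get ⟨i, by omega⟩ ≠ l.get ⟨i+1, by omega⟩ := by
      intro h
      rw [hn.get_inj_iff] at h
      simp at h
    exact (SimpleGraph.fromRel_adj _ _ _).mpr ⟨hne, Or.inl ⟨hc i hi,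
      hS _ (List.get_mem l ⟨i, by omega⟩), hS _ (List.get_mem l ⟨i+1, hi⟩)⟩⟩
  cases p with
  | nil => simp at hh; cases q with
    | nil => rfl
    | cons y r => simp at hh
  | cons x r =>
    cases q with
    | nil => simp at hh
    | cons y r' =>
      simp only [List.head?_cons, Option.some_inj] at hh
      subst hh
      have hlp : (x :: r).getLast? = some ((x :: r).getLast (by simp)) := List.getLast?_eq_getLast _
      have hlq : (x :: r').getLast? = some ((x :: r).getLast (by simp)) := by
        rw [← hl]; exact hlp
      obtain ⟨w1, hw1⟩ := exists_walk G (x :: r) x _ (chainG _ hpc hpn hpS) rfl hlp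
      obtain ⟨w2, hw2⟩ := exists_walk G (x :: r') x _ (chainG _ hqc hqn hqS) rfl hlq
      have hp1 : w1.IsPath := (SimpleGraph.Walk.isPath_def _).mpr (by rw [hw1]; exact hpn)
      have hp2 : w2.IsPath := (SimpleGraph.Walk.isPath_def _).mpr (by rw [hw2]; exact hqn)
      have := hforest.path_unique ⟨w1, hp1⟩ ⟨w2, hp2⟩
      have : w1 = w2 := by simpa using this
      rw [← hw1, ← hw2, this]


lemma tw_decomp [DecidableEq V] : ∀ {A : List V} (B : List V) {v : V}, v ∉ A →
    (A ++ v :: B).takeWhile (· ≠ v) = A ∧ (A ++ v :: B).dropWhile (· ≠ v) = v :: B := by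
  intro A
  induction A with
  | nil => intro B v _; constructor <;> simp
  | cons a A ih =>
    intro B v hv
    simp only [List.mem_cons, not_or] at hv
    have h1 : (a : V) ≠ v := fun h => hv.1 h.symm
    obtain ⟨ht, hd⟩ := ih B hv.2
    constructor
    · simp only [List.cons_append, List.takeWhile_cons]
      simp only [ne_eq, decide_not] at ht ⊢
      simp [h1, ht]
    · simp only [List.cons_append, List.dropWhile_cons]
      simp only [ne_eq, decide_not] at hd ⊢
      simp [h1, hd]

lemma getLast?_cons_self {v : V} {D : List V} (hv : v ∉ D) (h : (v :: D).getLast? = some v) :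
    D = [] := by
  cases D with
  | nil => rfl
  | cons d D =>
    rw [List.getLast?_cons_cons, List.getLast?_eq_getLast (l := d :: D) (by simp)] at h
    exact absurd (Option.some_inj.mp h ▸ List.getLast_mem (l := d :: D) (by simp)) hv

lemma eq_of_indexOf [DecidableEq V] : ∀ (l₁ l₂ : List V), l₁.Nodup → l₂.Nodup →
    (∀ x, x ∈ l₁ ↔ x ∈ l₂) → (∀ x ∈ l₁, l₁.idxOf x = l₂.idxOf x) → l₁ = l₂ := by
  intro l₁
  induction l₁ with
  | nil =>
    intro l₂ _ _ hm _
    cases l₂ with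
    | nil => rfl
    | cons y r => exact absurd ((hm y).mpr (by simp)) (by simp)
  | cons x r ih =>
    intro l₂ h₁ h₂ hm hi
    cases l₂ with
    | nil => exact absurd ((hm x).mp (by simp)) (by simp)
    | cons y r₂ =>
      have hxy : x = y := by
        have h0 : (x :: r).idxOf x = 0 := by simp
        have := hi x (by simp)
        rw [h0] at this
        by_contra hne
        rw [List.idxOf_cons_ne _ (by exact fun h => hne h.symm)] at this
        simp at this
      subst hxy
      simp only [List.nodup_cons] at h₁ h₂
      have hrm : ∀ z, z ∈ r ↔ z ∈ r₂ := by
        intro z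
        constructor
        · intro hz
          have hzx : z ≠ x := fun h => h₁.1 (h ▸ hz)
          have := (hm z).mp (by simp [hz])
          simp only [List.mem_cons] at this
          exact this.resolve_left hzx
        · intro hz
          have hzx : z ≠ x := fun h => h₂.1 (h ▸ hz)
          have := (hm z).mpr (by simp [hz])
          simp only [List.mem_cons] at this
          exact this.resolve_left hzx
      refine congrArg _ (ih r₂ h₁.2 h₂.2 hrm ?_)
      intro z hz
      have hzx : z ≠ x := fun h => h₁.1 (h ▸ hz)
      have := hi z (by simp [hz])
      rwa [List.idxOf_cons_ne _ (by exact fun h => hzx h.symm), List.idxOf_cons_ne _ (by exact fun h => hzx h.symm),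
        Nat.succ_inj] at this

lemma dropWhile_head_prop {α : Type*} {pr : α → Bool} :
    ∀ {l : List α} {a : α} {r : List α}, l.dropWhile pr = a :: r → pr a = false := by
  intro l
  induction l with
  | nil => intro a r h; simp at h
  | cons x l ih =>
    intro a r h
    rw [List.dropWhile_cons] at h
    by_cases hx : pr x
    · exact ih (by simpa [hx] using h)
    · simp [hx] at h
      rw [← h.1]
      simpa using hx

lemma opt_last_eq {v : V} {B D : List V} (hvB : v ∉ B) (hvD : v ∉ D)
    (h : (v :: B).getLast? = (v :: D).getLast?) : B.getLast? = D.getLast? := by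
  cases B with
  | nil =>
    cases D with
    | nil => rfl
    | cons d D0 =>
      exfalso
      have h2 : (v :: d :: D0).getLast? = some v := by rw [← h]; simp
      have := getLast?_cons_self hvD h2
      simp at this
  | cons b B0 =>
    cases D with
    | nil =>
      exfalso
      have h2 : (v :: b :: B0).getLast? = some v := by rw [h]; simp
      have := getLast?_cons_self hvB h2
      simp at this
    | cons d D0 =>
      rwa [List.getLast?_cons_cons, List.getLast?_cons_cons] at h

lemma getLast?_append_cons (A : List V) (v : V) (B : List V) :
    (A ++ v :: B).getLast? = (v :: B).getLast? := by
  rw [List.getLast?_append, List.getLast?_eq_getLast (l := v :: B) (by simp)]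
  rfl

lemma key [DecidableEq V] {E : V → V → Prop} {S : Finset V}
    (hforest : (SimpleGraph.fromRel fun a b => E a b ∧ a ∉ S ∧ b ∉ S).IsAcyclic) :
    ∀ N (p q : List V), p.length ≤ N → p.Chain' E → q.Chain' E → p.Nodup → q.Nodup →
    p.head? = q.head? → p.getLast? = q.getLast? →
    p.filter (· ∈ S) = q.filter (· ∈ S) →
    (∀ v ∈ S, ∀ A B C D : List V, p = A ++ v :: B → q = C ++ v :: D →
      A.getLast? = C.getLast? ∧ B.head? = D.head?) →
    p = q := by
  intro N
  induction N with
  | zero =>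
    intro p q hlen _ _ _ _ hh _ _ _
    have hp : p = [] := List.length_eq_zero_iff.mp (Nat.le_zero.mp hlen)
    subst hp
    simp only [List.head?_nil] at hh
    cases q with
    | nil => rfl
    | cons y r => simp at hh
  | succ N ih =>
    intro p q hlen hpc hqc hpn hqn hh hl hfil hps
    by_cases hF : p.filter (· ∈ S) = []
    · have hqF : q.filter (· ∈ S) = [] := hfil ▸ hF
      refine forest_seg hforest p q hpc hqc hpn hqn ?_ ?_ hh hl
      · intro x hx
        have := List.filter_eq_nil_iff.mp hF x hx
        simpa using this
      · intro x hx
        have := List.filter_eq_nil_iff.mp hqF x hx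
        simpa using this
    · -- decompose p at its first S-vertex
      set A := p.takeWhile (fun x => !decide (x ∈ S)) with hA
      set R := p.dropWhile (fun x => !decide (x ∈ S)) with hR
      have hAR : A ++ R = p := List.takeWhile_append_dropWhile
      have hAS : ∀ x ∈ A, x ∉ S := by
        intro x hx
        have := List.mem_takeWhile_imp hx
        simpa using this
      have hfA : A.filter (· ∈ S) = [] := by
        refine List.filter_eq_nil_iff.mpr ?_
        intro x hx; simpa using hAS x hx
      have hRne : R ≠ [] := by
        intro h
        apply hF
        rw [← hAR, h, List.append_nil, hfA]
      obtain ⟨v, B, hRvB⟩ := List.exists_cons_of_ne_nil hRne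
      have hvS : v ∈ S := by
        have := dropWhile_head_prop (hR.symm.trans hRvB)
        simpa using this
      have hp : p = A ++ v :: B := by rw [← hAR, hRvB]
      have hFp : p.filter (· ∈ S) = v :: B.filter (· ∈ S) := by
        rw [hp, List.filter_append, hfA, List.nil_append, List.filter_cons,
          if_pos (by simpa using hvS)]
      -- decompose q at its first S-vertex
      set C := q.takeWhile (fun x => !decide (x ∈ S)) with hC
      set R' := q.dropWhile (fun x => !decide (x ∈ S)) with hR'
      have hCR : C ++ R' = q := List.takeWhile_append_dropWhile
      have hCS : ∀ x ∈ C, x ∉ S := by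
        intro x hx
        have := List.mem_takeWhile_imp hx
        simpa using this
      have hfC : C.filter (· ∈ S) = [] := by
        refine List.filter_eq_nil_iff.mpr ?_
        intro x hx; simpa using hCS x hx
      have hR'ne : R' ≠ [] := by
        intro h
        rw [hFp] at hfil
        have : q.filter (· ∈ S) = [] := by rw [← hCR, h, List.append_nil, hfC]
        rw [this] at hfil
        simp at hfil
      obtain ⟨v', D, hR'vD⟩ := List.exists_cons_of_ne_nil hR'ne
      have hv'S : v' ∈ S := by
        have := dropWhile_head_prop (hR'.symm.trans hR'vD)
        simpa using this
      have hq' : q = C ++ v' :: D := by rw [← hCR, hR'vD]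
      have hFq : q.filter (· ∈ S) = v' :: D.filter (· ∈ S) := by
        rw [hq', List.filter_append, hfC, List.nil_append, List.filter_cons,
          if_pos (by simpa using hv'S)]
      have hvv' : v' = v := by
        rw [hFp, hFq] at hfil
        exact (List.cons.injEq _ _ _ _ ▸ hfil).1.symm
      rw [hvv'] at hq' hFq
      -- nodup consequences
      have hpn' := hpn; rw [hp, List.nodup_append] at hpn'
      have hqn' := hqn; rw [hq', List.nodup_append] at hqn'
      have hvB : v ∉ B := by
        have := hpn'.2.1; simp only [List.nodup_cons] at this; exact this.1
      have hvD : v ∉ D := by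
        have := hqn'.2.1; simp only [List.nodup_cons] at this; exact this.1
      -- apply the pred/succ hypothesis at v
      obtain ⟨hLast, hHead⟩ := hps v hvS A B C D hp hq'
      -- A = C
      have hAC : A = C := by
        refine forest_seg hforest A C (hpc.prefix ⟨v :: B, hp.symm⟩)
          (hqc.prefix ⟨v :: D, hq'.symm⟩) hpn'.1 hqn'.1 hAS hCS ?_ hLast
        cases hA0 : A with
        | nil =>
          cases hC0 : C with
          | nil => rfl
          | cons c C0 =>
            exfalso
            rw [hp, hq', hA0, hC0] at hh
            simp only [List.nil_append, List.cons_append, List.head?_cons,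
              Option.some_inj] at hh
            exact hCS c (by rw [hC0]; simp) (hh ▸ hvS)
        | cons a A0 =>
          cases hC0 : C with
          | nil =>
            exfalso
            rw [hp, hq', hA0, hC0] at hh
            simp only [List.nil_append, List.cons_append, List.head?_cons,
              Option.some_inj] at hh
            exact hAS a (by rw [hA0]; simp) (hh ▸ hvS)
          | cons c C0 =>
            rw [hp, hq', hA0, hC0] at hh
            simpa using hh
      -- B = D by induction
      have hBD : B = D := by
        refine ih B D ?_ (hpc.suffix (⟨A ++ [v], by rw [hp]; simp⟩))
          (hqc.suffix (⟨C ++ [v], by rw [hq']; simp⟩)) (hpn'.2.1.of_cons) (hqn'.2.1.of_cons)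
          hHead ?_ ?_ ?_
        · have : p.length = A.length + (B.length + 1) := by rw [hp]; simp
          omega
        · -- getLast? B = getLast? D
          rw [hp, getLast?_append_cons] at hl
          rw [hq', getLast?_append_cons] at hl
          exact opt_last_eq hvB hvD hl
        · -- filters
          rw [hFp, hFq] at hfil
          exact (List.cons.injEq _ _ _ _ ▸ hfil).2
        · -- pred/succ hypothesis for B, D
          intro u huS A' B' C' D' hBdec hDdec
          have hpdec : p = (A ++ v :: A') ++ u :: B' := by rw [hp, hBdec]; simp
          have hqdec : q = (C ++ v :: C') ++ u :: D' := by rw [hq', hDdec]; simp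
          obtain ⟨hL2, hH2⟩ := hps u huS _ _ _ _ hpdec hqdec
          refine ⟨?_, hH2⟩
          rw [getLast?_append_cons, getLast?_append_cons] at hL2
          have hvA' : v ∉ A' := fun hmem => hvB (by rw [hBdec]; simp [hmem])
          have hvC' : v ∉ C' := fun hmem => hvD (by rw [hDdec]; simp [hmem])
          exact opt_last_eq hvA' hvC' hL2
      rw [hp, hq', hAC, hBD]

end Aux

lemma mem_of_getLast?' {l : List V} {x : V} (h : l.getLast? = some x) : x ∈ l := by
  obtain ⟨h1, h2⟩ := List.mem_getLast?_eq_getLast (Option.mem_def.mpr h)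
  exact h2 ▸ List.getLast_mem h1

lemma optGetD_inj {o1 o2 : Option V} {v : V} (h1 : ∀ x ∈ o1, x ≠ v) (h2 : ∀ x ∈ o2, x ≠ v)
    (h : o1.getD v = o2.getD v) : o1 = o2 := by
  cases o1 <;> cases o2 <;> simp_all

/-- If `G` is a finite DAG on `n` vertices and `S` is a set of
`k` vertices such that the underlying undirected graph of `G - S` is a forest,
then `G` has at most `k^k · n^(2k)` directed `s`–`t` paths. -/
theorem stmt6 {V : Type*} [Fintype V] (E : V → V → Prop)
    (hacyc : NoDirCycle E) (s t : V)
    (k : ℕ) (S : Finset V) (hScard : S.card = k)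
    (hforest : (SimpleGraph.fromRel fun a b => E a b ∧ a ∉ S ∧ b ∉ S).IsAcyclic) :
    {p : List V | IsPathOn E s t p}.Finite ∧
    {p : List V | IsPathOn E s t p}.ncard ≤ k ^ k * Fintype.card V ^ (2 * k) := by
  classical
  have hfin : {p : List V | IsPathOn E s t p}.Finite := by
    apply (List.finite_length_le V (Fintype.card V)).subset
    intro p hp
    exact hp.2.2.2.length_le_card
  refine ⟨hfin, ?_⟩
  set pred : List V → V → V := fun p v =>
    if v ∈ p then (p.takeWhile (· ≠ v)).getLast?.getD v else v with hpred
  set succ : List V → V → V := fun p v =>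
    if v ∈ p then ((p.dropWhile (· ≠ v)).tail).head?.getD v else v with hsucc
  set Φ : ↥{p : List V | IsPathOn E s t p} → ((S → Fin k) × (S → V × V)) := fun x =>
    (fun v => ⟨min ((x.1.filter (· ∈ S)).idxOf ↑v) (k-1), by
        have hk : 0 < k := hScard ▸ Finset.card_pos.mpr ⟨↑v, v.2⟩
        omega⟩,
     fun v => (pred x.1 ↑v, succ x.1 ↑v)) with hΦ
  -- basic facts about decompositions
  have hmemaux : ∀ (p q : List V), IsPathOn E s t p → IsPathOn E s t q →
      ∀ v, pred p v = pred q v → v ∈ p → v ∈ q := by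
    intro p q hp hq v hpq hvp
    by_contra hvq
    obtain ⟨A, B, hAB⟩ := List.append_of_mem hvp
    have hvA : v ∉ A := by
      have := hp.2.2.2
      rw [hAB, List.nodup_append] at this
      exact fun hmem => this.2.2 v hmem v (by simp) rfl
    have htw : p.takeWhile (· ≠ v) = A := by
      rw [hAB]; exact (tw_decomp B hvA).1
    have h1 : pred p v = A.getLast?.getD v := by
      rw [hpred]; simp only [hvp, if_pos, htw]
    have h2 : pred q v = v := by rw [hpred]; simp [hvq]
    rw [h1, h2] at hpq
    cases hA : A with
    | nil =>
      rw [hA] at hAB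
      have hsv : s = v := by
        have := hp.1
        rw [hAB] at this
        simpa using this.symm
      cases hq' : q with
      | nil => rw [hq'] at hq; simp [IsPathOn] at hq
      | cons y r =>
        have : y = s := by
          have := hq.1; rw [hq'] at this; simpa using this
        exact hvq (by rw [hq', this, hsv]; simp)
    | cons a A0 =>
      rw [hA] at hpq
      rw [List.getLast?_eq_getLast (l := a :: A0) (by simp)] at hpq
      simp only [Option.getD_some] at hpq
      have : (a :: A0).getLast (by simp) ∈ A := by rw [hA]; exact List.getLast_mem _
      rw [hpq] at this
      exact hvA this
  -- injectivity
  have hinj : Function.Injective Φ := by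
    rintro ⟨p, hp⟩ ⟨q, hq⟩ h
    have h1 : ∀ v : S, ((p.filter (· ∈ S)).idxOf ↑v) ⊓ (k-1) =
        ((q.filter (· ∈ S)).idxOf ↑v) ⊓ (k-1) := by
      intro v
      have := congrFun (congrArg Prod.fst h) v
      exact congrArg Fin.val this
    have h2 : ∀ v : S, pred p ↑v = pred q ↑v ∧ succ p ↑v = succ q ↑v := by
      intro v
      have := congrFun (congrArg Prod.snd h) v
      exact ⟨congrArg Prod.fst this, congrArg Prod.snd this⟩
    have hmem : ∀ v ∈ S, (v ∈ p ↔ v ∈ q) := by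
      intro v hv
      constructor
      · exact hmemaux p q hp hq v (h2 ⟨v, hv⟩).1
      · exact hmemaux q p hq hp v (h2 ⟨v, hv⟩).1.symm
    have hlenp : (p.filter (· ∈ S)).length ≤ k := by
      have hnd : (p.filter (· ∈ S)).Nodup := hp.2.2.2.filter _
      have hsub : (p.filter (· ∈ S)).toFinset ⊆ S := by
        intro y hy
        simp only [List.mem_toFinset, List.mem_filter] at hy
        simpa using hy.2
      calc (p.filter (· ∈ S)).length = (p.filter (· ∈ S)).toFinset.card :=
            (List.toFinset_card_of_nodup hnd).symm
        _ ≤ S.card := Finset.card_le_card hsub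
        _ = k := hScard
    have hlenq : (q.filter (· ∈ S)).length ≤ k := by
      have hnd : (q.filter (· ∈ S)).Nodup := hq.2.2.2.filter _
      have hsub : (q.filter (· ∈ S)).toFinset ⊆ S := by
        intro y hy
        simp only [List.mem_toFinset, List.mem_filter] at hy
        simpa using hy.2
      calc (q.filter (· ∈ S)).length = (q.filter (· ∈ S)).toFinset.card :=
            (List.toFinset_card_of_nodup hnd).symm
        _ ≤ S.card := Finset.card_le_card hsub
        _ = k := hScard
    have hfil : p.filter (· ∈ S) = q.filter (· ∈ S) := by
      apply eq_of_indexOf _ _ (hp.2.2.2.filter _) (hq.2.2.2.filter _)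
      · intro x
        simp only [List.mem_filter, decide_eq_true_eq]
        constructor
        · rintro ⟨hxp, hxS⟩; exact ⟨(hmem x hxS).mp hxp, hxS⟩
        · rintro ⟨hxq, hxS⟩; exact ⟨(hmem x hxS).mpr hxq, hxS⟩
      · intro x hx
        have hxS : x ∈ S := by simp only [List.mem_filter, decide_eq_true_eq] at hx; exact hx.2
        have hxq : x ∈ q.filter (· ∈ S) := by
          simp only [List.mem_filter, decide_eq_true_eq] at hx ⊢
          exact ⟨(hmem x hxS).mp hx.1, hxS⟩
        have hip : (p.filter (· ∈ S)).idxOf x < (p.filter (· ∈ S)).length :=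
          List.idxOf_lt_length_iff.mpr hx
        have hiq : (q.filter (· ∈ S)).idxOf x < (q.filter (· ∈ S)).length :=
          List.idxOf_lt_length_iff.mpr hxq
        have := h1 ⟨x, hxS⟩
        simp only at this
        omega
    have hkey := key hforest p.length p q le_rfl hp.2.2.1 hq.2.2.1 hp.2.2.2 hq.2.2.2
      (hp.1.trans hq.1.symm) (hp.2.1.trans hq.2.1.symm) hfil ?_
    · exact Subtype.ext hkey
    · intro v hvS A B C D hpd hqd
      have hvA : v ∉ A := by
        have := hp.2.2.2; rw [hpd, List.nodup_append] at this
        exact fun hmem' => this.2.2 v hmem' v (by simp) rfl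
      have hvB : v ∉ B := by
        have := hp.2.2.2; rw [hpd, List.nodup_append, List.nodup_cons] at this
        exact this.2.1.1
      have hvC : v ∉ C := by
        have := hq.2.2.2; rw [hqd, List.nodup_append] at this
        exact fun hmem' => this.2.2 v hmem' v (by simp) rfl
      have hvD : v ∉ D := by
        have := hq.2.2.2; rw [hqd, List.nodup_append, List.nodup_cons] at this
        exact this.2.1.1
      have hvp : v ∈ p := by rw [hpd]; simp
      have hvq : v ∈ q := by rw [hqd]; simp
      have hpredp : pred p v = A.getLast?.getD v := by
        rw [hpred]; simp only [hvp, if_pos]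
        rw [hpd, (tw_decomp B hvA).1]
      have hpredq : pred q v = C.getLast?.getD v := by
        rw [hpred]; simp only [hvq, if_pos]
        rw [hqd, (tw_decomp D hvC).1]
      have hsuccp : succ p v = B.head?.getD v := by
        rw [hsucc]; simp only [hvp, if_pos]
        rw [hpd, (tw_decomp B hvA).2]
        rfl
      have hsuccq : succ q v = D.head?.getD v := by
        rw [hsucc]; simp only [hvq, if_pos]
        rw [hqd, (tw_decomp D hvC).2]
        rfl
      obtain ⟨hpe, hse⟩ := h2 ⟨v, hvS⟩
      rw [hpredp, hpredq] at hpe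
      rw [hsuccp, hsuccq] at hse
      constructor
      · refine optGetD_inj ?_ ?_ hpe
        · intro x hx he
          exact hvA (he ▸ mem_of_getLast?' hx)
        · intro x hx he
          exact hvC (he ▸ mem_of_getLast?' hx)
      · refine optGetD_inj ?_ ?_ hse
        · intro x hx he
          exact hvB (he ▸ List.mem_of_mem_head? hx)
        · intro x hx he
          exact hvD (he ▸ List.mem_of_mem_head? hx)
  -- counting
  have hcount : Nat.card ↥{p : List V | IsPathOn E s t p} ≤
      Nat.card ((S → Fin k) × (S → V × V)) := Nat.card_le_card_of_injective Φ hinj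
  have hcard : Nat.card ((S → Fin k) × (S → V × V)) =
      k ^ k * Fintype.card V ^ (2 * k) := by
    rw [Nat.card_eq_fintype_card, Fintype.card_prod, Fintype.card_fun, Fintype.card_fun,
      Fintype.card_coe, hScard, Fintype.card_fin, Fintype.card_prod]
    ring
  rw [← Nat.card_coe_set_eq]
  rw [hcard] at hcount
  exact hcount
end

section
/- In the choice-gadget graph built from finite nonempty sets of integers X₁, …, X_k, an integer W greater than every element of every X_i, and a real β with 0 < β < 1, every edge is a feasible transition; consequently, every directed s–t path of the choice-gadget graph is feasible. -/
/-!
Common definitions for time-inconsistent planning models (Kleinberg–Oren).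
A task graph is given by a finite vertex type `V`, an edge relation
`E : V → V → Prop` and edge weights `w : V → V → ℝ`.  A directed path is
represented by the list of its vertices (nonempty, consecutive vertices joined
by edges, no repeated vertices).
-/

variable {V : Type*}

/-- Vertices of the choice-gadget graph built from the finite sets
`X 0, …, X (k-1)` of integers: `v i` for `i ∈ {0,…,k}` and, for each gadget
`i ∈ {1,…,k}` (indexed by `Fin k`, gadget `i` ↔ index `i-1`) and each
`x ∈ X (i-1)`, a middle vertex `u (i-1) x`. -/
inductive CV (k : ℕ) (X : Fin k → Finset ℤ) : Type
  | v (i : Fin (k + 1))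
  | u (i : Fin k) (x : {z : ℤ // z ∈ X i})

/-- Edges of the choice-gadget graph: `v_{i-1} → u_{i,x}` and `u_{i,x} → v_i`
for every `x ∈ X_i`. -/
def CE (k : ℕ) (X : Fin k → Finset ℤ) : CV k X → CV k X → Prop
  | CV.v j, CV.u i _ => (j : ℕ) = (i : ℕ)
  | CV.u i _, CV.v j => (j : ℕ) = (i : ℕ) + 1
  | _, _ => False

/-- Edge weights of the choice-gadget graph: `v_{i-1} → u_{i,x}` has weight `x`
and `u_{i,x} → v_i` has weight `(W - x)/β`. -/
noncomputable def Cw (k : ℕ) (X : Fin k → Finset ℤ) (W : ℤ) (β : ℝ) :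
    CV k X → CV k X → ℝ
  | CV.v _, CV.u _ x => ((x : ℤ) : ℝ)
  | CV.u _ x, CV.v _ => ((W : ℝ) - ((x : ℤ) : ℝ)) / β
  | _, _ => 0


namespace Stmt12Aux

variable {V : Type*}

lemma pathCost_cons2 (w : V → V → ℝ) (a b : V) (l : List V) :
    pathCost w (a :: b :: l) = w a b + pathCost w (b :: l) := by
  simp [pathCost]

lemma pathCost_single (w : V → V → ℝ) (a : V) : pathCost w [a] = 0 := rfl

lemma perceived_cons2 (w : V → V → ℝ) (β : ℝ) (a b : V) (l : List V) :
    perceived w β (a :: b :: l) = w a b + β * pathCost w (b :: l) := by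
  simp [perceived, pathCost]

lemma perceived_single (w : V → V → ℝ) (β : ℝ) (a : V) : perceived w β [a] = 0 := rfl

lemma getLast?_cons_of {a x : V} {l : List V} (h : l.getLast? = some x) :
    (a :: l).getLast? = some x := by
  cases l with
  | nil => simp at h
  | cons b m => rw [List.getLast?_cons_cons]; exact h

variable {k : ℕ} {X : Fin k → Finset ℤ}

/-- canonical (max) choice in gadget `i` -/
def Mx (hX : ∀ i, (X i).Nonempty) (i : Fin k) : {z : ℤ // z ∈ X i} :=
  ⟨(X i).max' (hX i), (X i).max'_mem (hX i)⟩

noncomputable def cc (X : Fin k → Finset ℤ) (hX : ∀ i, (X i).Nonempty) (W : ℤ) (β : ℝ)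
    (j : ℕ) : ℝ :=
  if h : j < k then
    ((Mx hX ⟨j, h⟩ : ℤ) : ℝ) + ((W : ℝ) - ((Mx hX ⟨j, h⟩ : ℤ) : ℝ)) / β
  else 0

noncomputable def FF (X : Fin k → Finset ℤ) (hX : ∀ i, (X i).Nonempty) (W : ℤ) (β : ℝ)
    (j : ℕ) : ℝ := ∑ i ∈ Finset.Ico j k, cc X hX W β i

lemma FF_step (hX : ∀ i, (X i).Nonempty) (W : ℤ) (β : ℝ) {j : ℕ} (h : j < k) :
    FF X hX W β j = cc X hX W β j + FF X hX W β (j + 1) :=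
  Finset.sum_eq_sum_Ico_succ_bot h _

lemma FF_end (hX : ∀ i, (X i).Nonempty) (W : ℤ) (β : ℝ) {j : ℕ} (h : k ≤ j) :
    FF X hX W β j = 0 := by
  simp [FF, Finset.Ico_eq_empty (by omega : ¬ j < k)]

/-- The canonical path from `v j` to `v k`, always taking the maximal element. -/
def canon (hX : ∀ i, (X i).Nonempty) : ℕ → List (CV k X) := fun j =>
  if h : j < k then
    CV.v ⟨j, Nat.lt_succ_of_lt h⟩ :: CV.u ⟨j, h⟩ (Mx hX ⟨j, h⟩) :: canon hX (j + 1)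
  else [CV.v (Fin.last k)]
termination_by j => k - j
decreasing_by omega

lemma canon_head (hX : ∀ i, (X i).Nonempty) (j : ℕ) (hj : j ≤ k) :
    (canon hX j).head? = some (CV.v ⟨j, Nat.lt_succ_of_le hj⟩) := by
  rw [canon]
  split
  · rfl
  · have : j = k := by omega
    subst this; rfl

lemma canon_getLast (hX : ∀ i, (X i).Nonempty) (j : ℕ) :
    (canon hX j).getLast? = some (CV.v (Fin.last k)) := by
  rw [canon]
  split
  · exact getLast?_cons_of (getLast?_cons_of (canon_getLast hX (j + 1)))
  · rfl
termination_by k - j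
decreasing_by omega

lemma canon_chain (hX : ∀ i, (X i).Nonempty) (j : ℕ) :
    (canon hX j).Chain' (CE k X) := by
  rw [canon]
  split
  · rename_i h
    unfold List.Chain'
    rw [List.isChain_cons_cons]
    refine ⟨rfl, List.isChain_cons.2 ⟨?_, canon_chain hX (j + 1)⟩⟩
    intro y hy
    rw [canon_head hX (j + 1) (by omega)] at hy
    cases hy
    rfl
  · exact List.isChain_singleton _
termination_by k - j
decreasing_by omega

def lo (j : ℕ) : CV k X → Prop
  | CV.v i => j ≤ (i : ℕ)
  | CV.u i _ => j ≤ (i : ℕ)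

lemma canon_lo (hX : ∀ i, (X i).Nonempty) (j : ℕ) (hj : j ≤ k) :
    ∀ a ∈ canon hX j, lo j a := by
  rw [canon]
  split
  · rename_i h
    intro a ha
    rcases List.mem_cons.1 ha with rfl | ha
    · exact le_refl _
    rcases List.mem_cons.1 ha with rfl | ha
    · exact le_refl _
    · have := canon_lo hX (j + 1) (by omega) a ha
      cases a <;> simp only [lo] at this ⊢ <;> omega
  · intro a ha
    simp only [List.mem_singleton] at ha
    subst ha
    simp only [lo, Fin.val_last]
    omega
termination_by k - j
decreasing_by omega

lemma canon_nodup (hX : ∀ i, (X i).Nonempty) (j : ℕ) :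
    (canon hX j).Nodup := by
  rw [canon]
  split
  · rename_i h
    refine List.nodup_cons.2 ⟨?_, List.nodup_cons.2 ⟨?_, canon_nodup hX (j + 1)⟩⟩
    · intro hmem
      rcases List.mem_cons.1 hmem with heq | hmem
      · exact absurd heq (by simp)
      · have := canon_lo hX (j + 1) (by omega) _ hmem
        simp only [lo] at this; omega
    · intro hmem
      have := canon_lo hX (j + 1) (by omega) _ hmem
      simp only [lo] at this; omega
  · exact List.nodup_singleton _
termination_by k - j
decreasing_by omega

lemma canon_cost (hX : ∀ i, (X i).Nonempty) (W : ℤ) (β : ℝ) (j : ℕ) :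
    pathCost (Cw k X W β) (canon hX j) = FF X hX W β j := by
  rw [canon]
  split
  · rename_i h
    obtain ⟨rest, hrest⟩ : ∃ rest, canon hX (j + 1) =
        CV.v ⟨j + 1, by omega⟩ :: rest := by
      have := canon_head hX (j + 1) (by omega)
      cases hc : canon hX (j + 1) with
      | nil => rw [hc] at this; simp at this
      | cons a l => rw [hc] at this; simp at this; exact ⟨l, by rw [this]⟩
    rw [hrest, pathCost_cons2, pathCost_cons2, ← hrest, canon_cost hX W β (j + 1),
      FF_step hX W β h, cc, dif_pos h]
    show ((Mx hX ⟨j, h⟩ : ℤ) : ℝ) + (((W : ℝ) - ((Mx hX ⟨j, h⟩ : ℤ) : ℝ)) / β + _) = _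
    ring
  · rw [pathCost_single, FF_end hX W β (by omega)]
termination_by k - j
decreasing_by omega

lemma cc_le (hX : ∀ i, (X i).Nonempty) {W : ℤ} (hW : ∀ i, ∀ x ∈ X i, x < W)
    {β : ℝ} (hβ0 : 0 < β) (hβ1 : β < 1) (i : Fin k) (x : {z : ℤ // z ∈ X i}) :
    cc X hX W β (i : ℕ) ≤ ((x : ℤ) : ℝ) + ((W : ℝ) - ((x : ℤ) : ℝ)) / β := by
  rw [cc, dif_pos i.isLt]
  have hi : (⟨(i : ℕ), i.isLt⟩ : Fin k) = i := Fin.eta i i.isLt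
  rw [hi]
  set M : ℝ := ((Mx hX i : ℤ) : ℝ) with hM
  have hxM : ((x : ℤ) : ℝ) ≤ M := by
    rw [hM]
    exact_mod_cast (X i).le_max' _ x.2
  rw [← sub_nonneg]
  have key : ((x : ℤ) : ℝ) + ((W : ℝ) - ((x : ℤ) : ℝ)) / β - (M + ((W : ℝ) - M) / β)
      = (M - ((x : ℤ) : ℝ)) * (1 / β - 1) := by
    field_simp
    ring
  rw [key]
  apply mul_nonneg (by linarith)
  rw [sub_nonneg, le_div_iff₀ hβ0]
  linarith

/-- The key lower bound on the real cost of any path to the target. -/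
lemma lb (hX : ∀ i, (X i).Nonempty) {W : ℤ} (hW : ∀ i, ∀ x ∈ X i, x < W)
    {β : ℝ} (hβ0 : 0 < β) (hβ1 : β < 1) :
    ∀ p : List (CV k X), p.Chain' (CE k X) →
      p.getLast? = some (CV.v (Fin.last k)) →
      (∀ j : Fin (k + 1), p.head? = some (CV.v j) →
        FF X hX W β (j : ℕ) ≤ pathCost (Cw k X W β) p) ∧
      (∀ (i : Fin k) (x : {z : ℤ // z ∈ X i}), p.head? = some (CV.u i x) →
        ((W : ℝ) - ((x : ℤ) : ℝ)) / β + FF X hX W β ((i : ℕ) + 1)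
          ≤ pathCost (Cw k X W β) p) := by
  intro p
  induction p with
  | nil => intro _ hlast; simp at hlast
  | cons a l ih =>
    intro hchain hlast
    cases l with
    | nil =>
      simp only [List.getLast?_singleton, Option.some_inj] at hlast
      subst hlast
      constructor
      · intro j hj
        simp only [List.head?_cons, Option.some_inj, CV.v.injEq] at hj
        subst hj
        rw [Fin.val_last, FF_end hX W β le_rfl, pathCost_single]
      · intro i x hj
        simp at hj
    | cons b m =>
      have hCE : CE k X a b := (List.isChain_cons_cons.1 hchain).1
      have hchain' : (b :: m).Chain' (CE k X) := (List.isChain_cons_cons.1 hchain).2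
      have hlast' : (b :: m).getLast? = some (CV.v (Fin.last k)) := by
        rwa [List.getLast?_cons_cons] at hlast
      have IH := ih hchain' hlast'
      constructor
      · intro j hj
        simp only [List.head?_cons, Option.some_inj] at hj
        subst hj
        cases b with
        | v j' => exact absurd hCE (by simp [CE])
        | u i x =>
          have hji : (j : ℕ) = (i : ℕ) := hCE
          have h1 := IH.2 i x rfl
          rw [pathCost_cons2]
          have hc := cc_le hX hW hβ0 hβ1 i x
          rw [hji, FF_step hX W β i.isLt]
          show cc X hX W β (i : ℕ) + FF X hX W β ((i : ℕ) + 1)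
            ≤ ((x : ℤ) : ℝ) + pathCost (Cw k X W β) (CV.u i x :: m)
          linarith
      · intro i x hj
        simp only [List.head?_cons, Option.some_inj] at hj
        subst hj
        cases b with
        | u i' x' => exact absurd hCE (by simp [CE])
        | v j' =>
          have hji : (j' : ℕ) = (i : ℕ) + 1 := hCE
          have h1 := IH.1 j' rfl
          rw [pathCost_cons2]
          rw [hji] at h1
          show ((W : ℝ) - ((x : ℤ) : ℝ)) / β + FF X hX W β ((i : ℕ) + 1)
            ≤ ((W : ℝ) - ((x : ℤ) : ℝ)) / β + pathCost (Cw k X W β) (CV.v j' :: m)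
          linarith

end Stmt12Aux

/-- In the choice-gadget graph built from nonempty finite
sets of integers `X₁,…,X_k`, an integer `W` greater than every element of every
`X_i`, and `0 < β < 1`, every edge is a feasible transition; consequently every
directed `s`–`t` path is feasible. -/
theorem stmt12 (k : ℕ) (X : Fin k → Finset ℤ) (hX : ∀ i, (X i).Nonempty)
    (W : ℤ) (hW : ∀ i, ∀ x ∈ X i, x < W) (β : ℝ) (hβ0 : 0 < β) (hβ1 : β < 1) :
    (∀ a b, CE k X a b → FeasibleStep (CE k X) (Cw k X W β) β (CV.v (Fin.last k)) a b) ∧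
    (∀ p, IsPathOn (CE k X) (CV.v 0) (CV.v (Fin.last k)) p →
        FeasPath (CE k X) (Cw k X W β) β (CV.v 0) (CV.v (Fin.last k)) p) := by
  open Stmt12Aux in
  have hβ0' : β ≠ 0 := ne_of_gt hβ0
  have main : ∀ a b, CE k X a b →
      FeasibleStep (CE k X) (Cw k X W β) β (CV.v (Fin.last k)) a b := by
    intro a b hE
    refine ⟨hE, ?_⟩
    cases a with
    | u i x =>
      cases b with
      | u i' x' => exact absurd hE (by simp [CE])
      | v j =>
        have hji : (j : ℕ) = (i : ℕ) + 1 := hE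
        have hik : (i : ℕ) + 1 ≤ k := i.isLt
        have hj : j = ⟨(i : ℕ) + 1, Nat.succ_lt_succ i.isLt⟩ := Fin.ext hji
        subst hj
        obtain ⟨rest, hrest⟩ : ∃ rest, canon hX ((i : ℕ) + 1) =
            CV.v ⟨(i : ℕ) + 1, by omega⟩ :: rest := by
          have := canon_head hX ((i : ℕ) + 1) hik
          cases hc : canon hX ((i : ℕ) + 1) with
          | nil => rw [hc] at this; simp at this
          | cons a l => rw [hc] at this; simp at this; exact ⟨l, by rw [this]⟩
        refine ⟨rest, ⟨rfl, ?_, ?_, ?_⟩, ?_⟩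
        · rw [← hrest]
          exact getLast?_cons_of (canon_getLast hX _)
        · unfold List.Chain'
          rw [List.isChain_cons_cons]
          refine ⟨hE, ?_⟩
          rw [← hrest]
          exact canon_chain hX _
        · refine List.nodup_cons.2 ⟨?_, ?_⟩
          · rw [← hrest]
            intro hmem
            have := canon_lo hX ((i : ℕ) + 1) hik _ hmem
            simp only [lo] at this; omega
          · rw [← hrest]; exact canon_nodup hX _
        · intro r hr
          obtain ⟨hh, hl, hch, hnd⟩ := hr
          -- compute perceived of canonical
          have hcost : pathCost (Cw k X W β)
              (CV.v (⟨(i : ℕ) + 1, by omega⟩ : Fin (k + 1)) :: rest)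
              = FF X hX W β ((i : ℕ) + 1) := by
            rw [← hrest, canon_cost]
          rw [perceived_cons2, hcost]
          -- analyze r
          cases r with
          | nil => simp at hh
          | cons a' r' =>
            simp only [List.head?_cons, Option.some_inj] at hh
            subst hh
            cases r' with
            | nil => simp at hl
            | cons b' m =>
              have hE' : CE k X (CV.u i x) b' := (List.isChain_cons_cons.1 hch).1
              cases b' with
              | u i2 x2 => exact absurd hE' (by simp [CE])
              | v j2 =>
                have hji2 : (j2 : ℕ) = (i : ℕ) + 1 := hE'
                have hlb := (lb hX hW hβ0 hβ1 (CV.v j2 :: m)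
                  (List.isChain_cons_cons.1 hch).2
                  (by rwa [List.getLast?_cons_cons] at hl)).1 j2 rfl
                rw [hji2] at hlb
                rw [perceived_cons2]
                have := mul_le_mul_of_nonneg_left hlb (le_of_lt hβ0)
                show Cw k X W β (CV.u i x) (CV.v ⟨(i:ℕ)+1, _⟩) + β * FF X hX W β ((i:ℕ)+1)
                  ≤ Cw k X W β (CV.u i x) (CV.v j2) + β * pathCost (Cw k X W β) (CV.v j2 :: m)
                show ((W : ℝ) - ((x : ℤ) : ℝ)) / β + _ ≤ ((W : ℝ) - ((x : ℤ) : ℝ)) / β + _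
                linarith
    | v j =>
      cases b with
      | v j' => exact absurd hE (by simp [CE])
      | u i x =>
        have hji : (j : ℕ) = (i : ℕ) := hE
        have hik : (i : ℕ) + 1 ≤ k := i.isLt
        obtain ⟨rest, hrest⟩ : ∃ rest, canon hX ((i : ℕ) + 1) =
            CV.v ⟨(i : ℕ) + 1, by omega⟩ :: rest := by
          have := canon_head hX ((i : ℕ) + 1) hik
          cases hc : canon hX ((i : ℕ) + 1) with
          | nil => rw [hc] at this; simp at this
          | cons a l => rw [hc] at this; simp at this; exact ⟨l, by rw [this]⟩
        refine ⟨canon hX ((i : ℕ) + 1), ⟨rfl, ?_, ?_, ?_⟩, ?_⟩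
        · exact getLast?_cons_of (getLast?_cons_of (canon_getLast hX _))
        · unfold List.Chain'
          rw [List.isChain_cons_cons]
          refine ⟨hE, ?_⟩
          rw [hrest, List.isChain_cons_cons]
          refine ⟨rfl, ?_⟩
          rw [← hrest]
          exact canon_chain hX _
        · refine List.nodup_cons.2 ⟨?_, List.nodup_cons.2 ⟨?_, canon_nodup hX _⟩⟩
          · intro hmem
            rcases List.mem_cons.1 hmem with heq | hmem
            · exact absurd heq (by simp)
            · have := canon_lo hX ((i : ℕ) + 1) hik _ hmem
              simp only [lo] at this; omega
          · intro hmem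
            have := canon_lo hX ((i : ℕ) + 1) hik _ hmem
            simp only [lo] at this; omega
        · intro r hr
          obtain ⟨hh, hl, hch, hnd⟩ := hr
          have hcost : pathCost (Cw k X W β) (CV.u i x :: canon hX ((i : ℕ) + 1))
              = ((W : ℝ) - ((x : ℤ) : ℝ)) / β + FF X hX W β ((i : ℕ) + 1) := by
            rw [hrest, pathCost_cons2, ← hrest, canon_cost]
            rfl
          have hperc : perceived (Cw k X W β) β
              (CV.v j :: CV.u i x :: canon hX ((i : ℕ) + 1))
              = ((x : ℤ) : ℝ) + β * (((W : ℝ) - ((x : ℤ) : ℝ)) / β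
                  + FF X hX W β ((i : ℕ) + 1)) := by
            rw [perceived_cons2, hcost]; rfl
          have hWx : β * (((W : ℝ) - ((x : ℤ) : ℝ)) / β) = (W : ℝ) - ((x : ℤ) : ℝ) := by
            field_simp
          cases r with
          | nil => simp at hh
          | cons a' r' =>
            simp only [List.head?_cons, Option.some_inj] at hh
            subst hh
            cases r' with
            | nil =>
              simp only [List.getLast?_singleton, Option.some_inj, CV.v.injEq] at hl
              subst hl
              have := i.isLt
              simp only [Fin.val_last] at hji
              omega
            | cons b' m =>
              have hE' : CE k X (CV.v j) b' := (List.isChain_cons_cons.1 hch).1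
              cases b' with
              | v j2 => exact absurd hE' (by simp [CE])
              | u i2 x2 =>
                have hji2 : (j : ℕ) = (i2 : ℕ) := hE'
                have hval : (i2 : ℕ) = (i : ℕ) := by omega
                have hlb := (lb hX hW hβ0 hβ1 (CV.u i2 x2 :: m)
                  (List.isChain_cons_cons.1 hch).2
                  (by rwa [List.getLast?_cons_cons] at hl)).2 i2 x2 rfl
                rw [hval] at hlb
                rw [hperc, perceived_cons2]
                have hmul := mul_le_mul_of_nonneg_left hlb (le_of_lt hβ0)
                have hWx2 : β * (((W : ℝ) - ((x2 : ℤ) : ℝ)) / β)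
                    = (W : ℝ) - ((x2 : ℤ) : ℝ) := by field_simp
                show ((x : ℤ) : ℝ) + β * (((W : ℝ) - ((x : ℤ) : ℝ)) / β
                    + FF X hX W β ((i : ℕ) + 1))
                  ≤ ((x2 : ℤ) : ℝ) + β * pathCost (Cw k X W β) (CV.u i2 x2 :: m)
                have expand : β * (((W : ℝ) - ((x2 : ℤ) : ℝ)) / β + FF X hX W β ((i : ℕ) + 1))
                    = (W : ℝ) - ((x2 : ℤ) : ℝ) + β * FF X hX W β ((i : ℕ) + 1) := by
                  rw [mul_add, hWx2]
                have expand1 : β * (((W : ℝ) - ((x : ℤ) : ℝ)) / β + FF X hX W β ((i : ℕ) + 1))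
                    = (W : ℝ) - ((x : ℤ) : ℝ) + β * FF X hX W β ((i : ℕ) + 1) := by
                  rw [mul_add, hWx]
                nlinarith [hmul, expand, expand1]
  refine ⟨main, ?_⟩
  intro p hp
  exact ⟨hp, List.IsChain.imp (fun a b h => main a b h) hp.2.2.1⟩
end

section
/- In the choice-gadget graph built from finite nonempty sets of integers X₁, …, X_k, an integer W greater than every element of every X_i, and a real β with 0 < β < 1: for every choice (x₁, …, x_k) ∈ X₁ × ⋯ × X_k, the corresponding s–t path (going through u_{i,x_i} in the i-th gadget) has cost ∑_{i=1}^{k} ( x_i + (W − x_i)/β ); moreover, for any integer T, setting Y = T·(1 − 1/β) + k·W/β, the choice-gadget graph contains a directed s–t path of cost Y if and only if there exist x_i ∈ X_i for each i with ∑_{i=1}^{k} x_i = T. -/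
/-!
Common definitions for time-inconsistent planning models (Kleinberg–Oren).
A task graph is given by a finite vertex type `V`, an edge relation
`E : V → V → Prop` and edge weights `w : V → V → ℝ`.  A directed path is
represented by the list of its vertices (nonempty, consecutive vertices joined
by edges, no repeated vertices).
-/

variable {V : Type*}

/-- The `s`–`t` path of the choice-gadget graph corresponding to a choice
`(x₁,…,x_k) ∈ X₁ × ⋯ × X_k`: it goes through `u_{i,x_i}` in the `i`-th gadget. -/
def Cpath (k : ℕ) (X : Fin k → Finset ℤ) (f : ∀ i : Fin k, {z : ℤ // z ∈ X i}) :
    List (CV k X) :=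
  ((List.finRange k).flatMap fun i => [CV.v i.castSucc, CV.u i (f i)]) ++ [CV.v (Fin.last k)]
namespace Stmt13Aux

theorem pathCost_cons {V : Type*} (w : V → V → ℝ) (a b : V) (l : List V) :
    pathCost w (a :: b :: l) = w a b + pathCost w (b :: l) := by
  simp [pathCost]

theorem pathCost_single {V : Type*} (w : V → V → ℝ) (a : V) : pathCost w [a] = 0 := by
  simp [pathCost]

variable {k : ℕ} {X : Fin k → Finset ℤ}

def idx : CV k X → ℕ
  | CV.v i => 2 * (i : ℕ)
  | CV.u i _ => 2 * (i : ℕ) + 1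

def Cpath' (f : ∀ i : Fin k, {z : ℤ // z ∈ X i}) (j : ℕ) : List (CV k X) :=
  (((List.finRange k).drop j).flatMap fun i => [CV.v i.castSucc, CV.u i (f i)]) ++
    [CV.v (Fin.last k)]

noncomputable def G (X : Fin k → Finset ℤ) (W : ℤ) (β : ℝ)
    (f : ∀ i : Fin k, {z : ℤ // z ∈ X i}) (m : ℕ) : ℝ :=
  if h : m < k then ((f ⟨m, h⟩ : ℤ) : ℝ) + ((W : ℝ) - ((f ⟨m, h⟩ : ℤ) : ℝ)) / β else 0

theorem cpath'_rec (f : ∀ i : Fin k, {z : ℤ // z ∈ X i}) (j : ℕ) (hj : j < k) :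
    Cpath' f j = CV.v ⟨j, Nat.lt_succ_of_lt hj⟩ :: CV.u ⟨j, hj⟩ (f ⟨j, hj⟩) ::
      Cpath' f (j + 1) := by
  unfold Cpath'
  rw [List.drop_eq_getElem_cons (by simp [hj])]
  simp [Fin.castSucc]

theorem cpath'_top (f : ∀ i : Fin k, {z : ℤ // z ∈ X i}) (j : ℕ) (hj : k ≤ j) :
    Cpath' f j = [CV.v (Fin.last k)] := by
  unfold Cpath'
  rw [List.drop_eq_nil_of_le (by simp [hj])]
  rfl

theorem cpath'_spec (W : ℤ) (β : ℝ) (f : ∀ i : Fin k, {z : ℤ // z ∈ X i})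
    (j : ℕ) (hj : j ≤ k) :
    (Cpath' f j).head? = some (CV.v ⟨j, Nat.lt_succ_of_le hj⟩) ∧
    (Cpath' f j).getLast? = some (CV.v (Fin.last k)) ∧
    (Cpath' f j).Chain' (CE k X) ∧
    (Cpath' f j).Nodup ∧
    (∀ a ∈ Cpath' f j, 2 * j ≤ idx a) ∧
    pathCost (Cw k X W β) (Cpath' f j) = ∑ m ∈ Finset.Ico j k, G X W β f m := by
  generalize hd : k - j = d
  induction d generalizing j with
  | zero =>
    have hjk : j = k := by omega
    subst hjk
    rw [cpath'_top f j le_rfl]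
    refine ⟨by simp [Fin.last], by simp, List.isChain_singleton _, by simp, ?_, by simp [pathCost_single]⟩
    intro a ha
    simp only [List.mem_singleton] at ha
    subst ha
    simp [idx, Fin.last]
  | succ n ih =>
    have hjk : j < k := by omega
    obtain ⟨h1, h2, h3, h4, h5, h6⟩ := ih (j + 1) hjk (by omega)
    have hC : CV.v ⟨j + 1, Nat.lt_succ_of_le hjk⟩ :: (Cpath' f (j+1)).tail
        = Cpath' f (j + 1) := List.cons_head?_tail h1
    rw [cpath'_rec f j hjk, ← hC]
    set t := (Cpath' f (j+1)).tail with ht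
    refine ⟨by simp, ?_, ?_, ?_, ?_, ?_⟩
    · rw [List.getLast?_cons_cons, List.getLast?_cons_cons, hC, h2]
    · show List.IsChain _ _; rw [List.isChain_cons_cons, List.isChain_cons_cons]
      exact ⟨by simp [CE], by simp [CE], by rw [hC]; exact h3⟩
    · rw [List.nodup_cons, List.nodup_cons]
      refine ⟨?_, ?_, by rw [hC]; exact h4⟩
      · intro hmem
        rw [List.mem_cons] at hmem
        rcases hmem with h | h
        · exact absurd h (by simp)
        · rw [hC] at h
          have := h5 _ h
          simp [idx] at this
      · intro hmem
        rw [hC] at hmem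
        have := h5 _ hmem
        simp [idx] at this
        omega
    · intro a ha
      rcases ha with _ | ⟨_, ha⟩
      · simp [idx]
      rcases ha with _ | ⟨_, ha⟩
      · simp [idx]
      · rw [hC] at ha
        have := h5 _ ha
        omega
    · rw [pathCost_cons, pathCost_cons, hC, h6,
        Finset.sum_eq_sum_Ico_succ_bot hjk]
      simp only [Cw, G, dif_pos hjk]
      ring

theorem struct (W : ℤ) (β : ℝ) :
    ∀ (n : ℕ) (p : List (CV k X)), p.length ≤ n → ∀ (j : Fin (k+1)),
      p.Chain' (CE k X) → p.head? = some (CV.v j) →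
      p.getLast? = some (CV.v (Fin.last k)) →
      ∃ h : ℕ → ℤ, (∀ m (hm : m < k), (j : ℕ) ≤ m → h m ∈ X ⟨m, hm⟩) ∧
        pathCost (Cw k X W β) p = ∑ m ∈ Finset.Ico (j : ℕ) k,
          (((h m) : ℝ) + ((W : ℝ) - ((h m) : ℝ)) / β) := by
  intro n
  induction n with
  | zero =>
    intro p hp j _ hh _
    interval_cases hn : p.length
    · cases p with
      | nil => simp at hh
      | cons a l => simp at hn
  | succ n ih =>
    intro p hp j hchain hhead hlast
    match p, hhead with
    | (a :: rest), hhead =>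
    have ha : a = CV.v j := by simpa using hhead
    subst ha
    match rest with
    | [] =>
      have hj : CV.v j = (CV.v (Fin.last k) : CV k X) := by simpa using hlast
      have hj' : j = Fin.last k := by injection hj
      subst hj'
      refine ⟨fun _ => 0, ?_, ?_⟩
      · intro m hm hm'
        simp [Fin.last] at hm'
        omega
      · simp [pathCost_single, Fin.last]
    | (b :: rest2) =>
      have hab : CE k X (CV.v j) b := (List.isChain_cons_cons.mp hchain).1
      match b, hab with
      | CV.u i x, hab =>
      have hji : (j : ℕ) = (i : ℕ) := hab
      match rest2 with
      | [] =>
        exfalso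
        have : (CV.u i x : CV k X) = CV.v (Fin.last k) := by simpa using hlast
        exact absurd this (by simp)
      | (c :: rest3) =>
        have hbc : CE k X (CV.u i x) c := ((List.isChain_cons_cons.mp hchain).2 |> List.isChain_cons_cons.mp).1
        match c, hbc with
        | CV.v j2, hbc =>
        have hj2 : (j2 : ℕ) = (i : ℕ) + 1 := hbc
        have hchain3 : (CV.v j2 :: rest3).Chain' (CE k X) :=
          ((List.isChain_cons_cons.mp hchain).2 |> List.isChain_cons_cons.mp).2
        have hlast3 : (CV.v j2 :: rest3).getLast? = some (CV.v (Fin.last k)) := by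
          rw [List.getLast?_cons_cons, List.getLast?_cons_cons] at hlast
          exact hlast
        have hlen : (CV.v j2 :: rest3).length ≤ n := by
          simp only [List.length_cons] at hp ⊢
          omega
        obtain ⟨h', hmem', hcost'⟩ := ih _ hlen j2 hchain3 rfl hlast3
        have hik : (i : ℕ) < k := i.isLt
        refine ⟨Function.update h' (j : ℕ) (x : ℤ), ?_, ?_⟩
        · intro m hm hjm
          rcases eq_or_ne m (j : ℕ) with hmj | hmj
          · have hfe : (⟨m, hm⟩ : Fin k) = i := Fin.ext (show m = (i:ℕ) by omega)
            have h1 : Function.update h' (↑j) ((x : ℤ)) m = (x : ℤ) := by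
              rw [hmj, Function.update_self]
            rw [h1, hfe]
            exact x.2
          · rw [Function.update_of_ne hmj]
            exact hmem' m hm (by omega)
        · rw [pathCost_cons, pathCost_cons, hcost']
          have hsum : ∑ m ∈ Finset.Ico ((j2 : ℕ)) k,
              (((h' m) : ℝ) + ((W : ℝ) - ((h' m) : ℝ)) / β)
              = ∑ m ∈ Finset.Ico ((j : ℕ) + 1) k,
              (((Function.update h' (j : ℕ) (x : ℤ) m) : ℝ) +
                ((W : ℝ) - ((Function.update h' (j : ℕ) (x : ℤ) m) : ℝ)) / β) := by
            rw [hj2, ← hji]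
            refine Finset.sum_congr rfl ?_
            intro m hm
            rw [Finset.mem_Ico] at hm
            rw [Function.update_of_ne (by omega)]
          rw [hsum, Finset.sum_eq_sum_Ico_succ_bot (by omega : (j : ℕ) < k)]
          rw [Function.update_self]
          simp only [Cw]
          ring

end Stmt13Aux
theorem sum_cost_eq (k : ℕ) (W : ℤ) (β : ℝ) (hβ : β ≠ 0) (g : Fin k → ℝ) :
    ∑ i : Fin k, (g i + ((W : ℝ) - g i) / β) =
      (∑ i : Fin k, g i) * (1 - 1 / β) + (k : ℝ) * (W : ℝ) / β := by
  rw [Finset.sum_add_distrib, ← Finset.sum_div, Finset.sum_sub_distrib,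
    Finset.sum_const, Finset.card_univ, Fintype.card_fin, nsmul_eq_mul]
  field_simp
  ring

theorem stmt13 (k : ℕ) (X : Fin k → Finset ℤ) (hX : ∀ i, (X i).Nonempty)
    (W : ℤ) (hW : ∀ i, ∀ x ∈ X i, x < W) (β : ℝ) (hβ0 : 0 < β) (hβ1 : β < 1)
    (T : ℤ) :
    (∀ f : ∀ i : Fin k, {z : ℤ // z ∈ X i},
      IsPathOn (CE k X) (CV.v 0) (CV.v (Fin.last k)) (Cpath k X f) ∧
      pathCost (Cw k X W β) (Cpath k X f) =
        ∑ i : Fin k, (((f i : ℤ) : ℝ) + ((W : ℝ) - ((f i : ℤ) : ℝ)) / β)) ∧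
    ((∃ p : List (CV k X), IsPathOn (CE k X) (CV.v 0) (CV.v (Fin.last k)) p ∧
        pathCost (Cw k X W β) p = (T : ℝ) * (1 - 1 / β) + (k : ℝ) * (W : ℝ) / β) ↔
      ∃ f : ∀ i : Fin k, {z : ℤ // z ∈ X i}, (∑ i : Fin k, (f i : ℤ)) = T) := by
  have hβ : β ≠ 0 := ne_of_gt hβ0
  have hne : (1 : ℝ) - 1 / β ≠ 0 := by
    have h1 : (1 : ℝ) < 1 / β := by
      rw [lt_div_iff₀ hβ0]; linarith
    exact ne_of_lt (by linarith)
  have key : ∀ f : ∀ i : Fin k, {z : ℤ // z ∈ X i},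
      IsPathOn (CE k X) (CV.v 0) (CV.v (Fin.last k)) (Cpath k X f) ∧
      pathCost (Cw k X W β) (Cpath k X f) =
        ∑ i : Fin k, (((f i : ℤ) : ℝ) + ((W : ℝ) - ((f i : ℤ) : ℝ)) / β) := by
    intro f
    obtain ⟨h1, h2, h3, h4, _, h6⟩ := Stmt13Aux.cpath'_spec W β f 0 (Nat.zero_le k)
    have hCp : Cpath k X f = Stmt13Aux.Cpath' f 0 := by
      simp [Cpath, Stmt13Aux.Cpath']
    have h0 : (⟨0, Nat.lt_succ_of_le (Nat.zero_le k)⟩ : Fin (k + 1)) = 0 :=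
      Fin.ext (by simp)
    refine ⟨⟨by rw [hCp, h1, h0], by rw [hCp]; exact h2, by rw [hCp]; exact h3,
      by rw [hCp]; exact h4⟩, ?_⟩
    rw [hCp, h6, ← Finset.range_eq_Ico,
      ← Fin.sum_univ_eq_sum_range (fun m => Stmt13Aux.G X W β f m) k]
    refine Finset.sum_congr rfl fun i _ => ?_
    simp [Stmt13Aux.G, i.isLt]
  refine ⟨key, ?_, ?_⟩
  · rintro ⟨p, ⟨hh, hl, hc, _⟩, hcost⟩
    obtain ⟨h, hmem, hsum⟩ :=
      Stmt13Aux.struct W β p.length p le_rfl 0 hc (by simpa using hh) hl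
    simp only [Fin.val_zero] at hsum hmem
    refine ⟨fun i => ⟨h i, hmem i i.isLt (Nat.zero_le _)⟩, ?_⟩
    have hsum2 : pathCost (Cw k X W β) p =
        ∑ i : Fin k, (((h i : ℝ)) + ((W : ℝ) - (h i : ℝ)) / β) := by
      rw [hsum, ← Finset.range_eq_Ico,
        ← Fin.sum_univ_eq_sum_range (fun m => ((h m : ℝ)) + ((W : ℝ) - (h m : ℝ)) / β) k]
    rw [hsum2, sum_cost_eq k W β hβ] at hcost
    have hST : (∑ i : Fin k, ((h i : ℤ) : ℝ)) = (T : ℝ) :=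
      mul_right_cancel₀ hne (by linarith)
    have : (∑ i : Fin k, (h (i : ℕ))) = T := by exact_mod_cast hST
    simpa using this
  · rintro ⟨f, hf⟩
    refine ⟨Cpath k X f, (key f).1, ?_⟩
    rw [(key f).2, sum_cost_eq k W β hβ]
    have : (∑ i : Fin k, ((f i : ℤ) : ℝ)) = (T : ℝ) := by exact_mod_cast hf
    rw [this]
end
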